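/- arXiv:2503.23143 — 7 statements merged into one kernel-verified Lean document; each statement's English description precedes it below -/
import Mathlib

section
/- Let (Ω, μ) be a finite measure space. For each n ∈ ℕ let g_n : Ω → ℝ be integrable with g_n(x) > 0 for μ-a.e. x, and let h : Ω → ℝ be integrable such that ∫_Ω φ·g_n dμ → ∫_Ω φ·h dμ for every bounded measurable φ : Ω → ℝ. Let γ : ℝ → ℝ be Borel measurable with γ(t) ≥ 0 for all t > 0 and γ(t) → +∞ as t → 0⁺, and suppose sup_n ∫_Ω γ(g_n(x)) dμ(x) < +∞. Then h(x) > 0 for μ-a.e. x ∈ Ω. -/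
open MeasureTheory Filter Topology
open scoped ENNReal

/-- If `g n → h` weakly in `L¹(μ)` (tested against bounded measurable functions), each `g n`
is a.e. positive, and `∫ γ(g n) dμ` is uniformly bounded for a Borel function `γ ≥ 0` on
`(0,∞)` blowing up at `0⁺`, then `h > 0` a.e. -/
theorem weak_limit_of_jacobians_pos {Ω : Type*} [MeasurableSpace Ω] (μ : Measure Ω)
    [IsFiniteMeasure μ] (g : ℕ → Ω → ℝ) (h : Ω → ℝ) (γ : ℝ → ℝ)
    (hg_int : ∀ n, Integrable (g n) μ)
    (hg_pos : ∀ n, ∀ᵐ x ∂μ, 0 < g n x)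
    (hh_int : Integrable h μ)
    (hconv : ∀ φ : Ω → ℝ, Measurable φ → (∃ M : ℝ, ∀ x, |φ x| ≤ M) →
      Tendsto (fun n => ∫ x, φ x * g n x ∂μ) atTop (𝓝 (∫ x, φ x * h x ∂μ)))
    (hγ_meas : Measurable γ)
    (hγ_nonneg : ∀ t : ℝ, 0 < t → 0 ≤ γ t)
    (hγ_blow : Tendsto γ (nhdsWithin 0 (Set.Ioi 0)) atTop)
    (hbound : ∃ C : ℝ≥0∞, C < ⊤ ∧ ∀ n, ∫⁻ x, ENNReal.ofReal (γ (g n x)) ∂μ ≤ C) :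
    ∀ᵐ x ∂μ, 0 < h x := by
  obtain ⟨C, hC_lt, hC⟩ := hbound
  -- measurable representative of h
  set h' : Ω → ℝ := hh_int.aestronglyMeasurable.mk h with hh'def
  have hh'_meas : Measurable h' := hh_int.aestronglyMeasurable.measurable_mk
  have hh'_ae : h =ᵐ[μ] h' := hh_int.aestronglyMeasurable.ae_eq_mk
  set Z : Set Ω := {x | h' x ≤ 0} with hZdef
  have hZ : MeasurableSet Z := measurableSet_le hh'_meas measurable_const
  -- the test function
  set φ : Ω → ℝ := Z.indicator (fun _ => (1 : ℝ)) with hφdef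
  have hφ_meas : Measurable φ := measurable_const.indicator hZ
  have hφ_bdd : ∃ M : ℝ, ∀ x, |φ x| ≤ M := by
    refine ⟨1, fun x => ?_⟩
    by_cases hx : x ∈ Z <;> simp [hφdef, Set.indicator_apply, hx]
  have hφg : ∀ (u : Ω → ℝ), (fun x => φ x * u x) = Z.indicator u := by
    intro u; funext x
    by_cases hx : x ∈ Z <;> simp [hφdef, Set.indicator_apply, hx]
  have hconvZ : Tendsto (fun n => ∫ x in Z, g n x ∂μ) atTop (𝓝 (∫ x in Z, h x ∂μ)) := by
    have := hconv φ hφ_meas hφ_bdd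
    simp_rw [hφg, integral_indicator hZ] at this
    exact this
  -- each set integral of g n over Z is nonnegative
  have hpos_int : ∀ n, 0 ≤ ∫ x in Z, g n x ∂μ := fun n =>
    setIntegral_nonneg_ae hZ (((hg_pos n).mono (fun x hx _ => hx.le)))
  -- ∫ h over Z equals ∫ h' over Z which is ≤ 0
  have hintZ_eq : ∫ x in Z, h x ∂μ = ∫ x in Z, h' x ∂μ :=
    integral_congr_ae (ae_restrict_of_ae hh'_ae)
  have hintZ_nonpos : ∫ x in Z, h x ∂μ ≤ 0 := by
    rw [hintZ_eq]
    exact setIntegral_nonpos hZ (fun x hx => hx)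
  have hintZ_nonneg : 0 ≤ ∫ x in Z, h x ∂μ :=
    ge_of_tendsto' hconvZ hpos_int
  have hintZ_zero : ∫ x in Z, h x ∂μ = 0 := le_antisymm hintZ_nonpos hintZ_nonneg
  rw [hintZ_zero] at hconvZ
  -- L¹ convergence to zero of the indicators
  set f : ℕ → Ω → ℝ := fun n => Z.indicator (g n) with hfdef
  have hf_int : ∀ n, Integrable (f n) μ := fun n => (hg_int n).indicator hZ
  have hf_norm : ∀ n, ∫ x, ‖f n x‖ ∂μ = ∫ x in Z, g n x ∂μ := by
    intro n
    rw [← integral_indicator hZ]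
    refine integral_congr_ae ?_
    filter_upwards [hg_pos n] with x hx
    by_cases hxZ : x ∈ Z <;>
      simp [hfdef, Set.indicator_apply, hxZ, abs_of_pos hx]
  have h_eLp : Tendsto (fun n => eLpNorm (f n - 0) 1 μ) atTop (𝓝 0) := by
    have h1 : ∀ n, eLpNorm (f n - 0) 1 μ = ENNReal.ofReal (∫ x in Z, g n x ∂μ) := by
      intro n
      rw [sub_zero, eLpNorm_one_eq_lintegral_enorm,
        ← ofReal_integral_norm_eq_lintegral_enorm (hf_int n), hf_norm n]
    simp_rw [h1]
    have := (ENNReal.continuous_ofReal.tendsto 0).comp hconvZ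
    simpa [Function.comp_def] using this
  have h_inmeas : TendstoInMeasure μ f atTop (0 : Ω → ℝ) :=
    tendstoInMeasure_of_tendsto_eLpNorm one_ne_zero
      (fun n => (hf_int n).aestronglyMeasurable) aestronglyMeasurable_zero h_eLp
  obtain ⟨ns, hns_mono, hns_ae⟩ := h_inmeas.exists_seq_tendsto_ae
  -- on Z, a.e. the liminf of ofReal (γ (g (ns k) x)) is ∞
  have hall_pos : ∀ᵐ x ∂μ, ∀ n, 0 < g n x := ae_all_iff.mpr hg_pos
  have hliminf_top : ∀ᵐ x ∂μ.restrict Z,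
      Filter.liminf (fun k => ENNReal.ofReal (γ (g (ns k) x))) atTop = ⊤ := by
    filter_upwards [ae_restrict_of_ae hall_pos, ae_restrict_of_ae hns_ae,
      ae_restrict_mem hZ] with x hxpos hxt hxZ
    have hfx : ∀ k, f (ns k) x = g (ns k) x := fun k =>
      Set.indicator_of_mem hxZ (g (ns k))
    have htend : Tendsto (fun k => g (ns k) x) atTop (𝓝[>] (0 : ℝ)) := by
      rw [tendsto_nhdsWithin_iff]
      constructor
      · simpa [hfx] using hxt
      · exact Eventually.of_forall fun k => hxpos (ns k)
    have : Tendsto (fun k => ENNReal.ofReal (γ (g (ns k) x))) atTop (𝓝 ⊤) :=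
      ENNReal.tendsto_ofReal_atTop.comp (hγ_blow.comp htend)
    exact this.liminf_eq
  -- Fatou on Z
  have hfatou : ∫⁻ x in Z, Filter.liminf (fun k => ENNReal.ofReal (γ (g (ns k) x))) atTop ∂μ
      ≤ Filter.liminf (fun k => ∫⁻ x in Z, ENNReal.ofReal (γ (g (ns k) x)) ∂μ) atTop :=
    lintegral_liminf_le' fun k =>
      ENNReal.measurable_ofReal.comp_aemeasurable
        (hγ_meas.comp_aemeasurable ((hg_int (ns k)).aemeasurable.restrict))
  have hZ_zero : μ Z = 0 := by
    have hL : ∫⁻ x in Z, Filter.liminf (fun k => ENNReal.ofReal (γ (g (ns k) x))) atTop ∂μ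
        = ⊤ * μ Z := by
      rw [lintegral_congr_ae hliminf_top]
      simp [lintegral_const, Measure.restrict_apply_univ]
    have hR : Filter.liminf (fun k => ∫⁻ x in Z, ENNReal.ofReal (γ (g (ns k) x)) ∂μ) atTop ≤ C := by
      refine liminf_le_of_le (by isBoundedDefault) ?_
      intro b hb
      obtain ⟨k, hk⟩ := hb.exists
      exact hk.trans ((setLIntegral_le_lintegral Z _).trans (hC (ns k)))
    have : ⊤ * μ Z ≤ C := by rw [← hL]; exact hfatou.trans hR
    by_contra hne
    rw [ENNReal.top_mul hne] at this
    exact absurd (this.trans_lt hC_lt) (lt_irrefl _)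
  -- conclude
  have : ∀ᵐ x ∂μ, 0 < h' x := by
    have hz : ∀ᵐ x ∂μ, x ∉ Z := compl_mem_ae_iff.mpr hZ_zero
    filter_upwards [hz] with x hx
    simpa [hZdef, not_le] using hx
  filter_upwards [this, hh'_ae] with x hx heq
  rw [heq]; exact hx
end

section
/- Let Ω ⊆ ℝ^N be a bounded open set and y : Ω → ℝ^N be injective and differentiable at every point of Ω with det Dy(x) > 0 for all x ∈ Ω; denote by y⁻¹ : y(Ω) → Ω the inverse of y on its image. Suppose that x ↦ adj Dy(x) is integrable on Ω, and let ψ : ℝ^N → ℝ be bounded and continuous. Then ξ ↦ ψ(ξ)·(Dy(y⁻¹(ξ)))⁻¹ is integrable on y(Ω) and ∫_{y(Ω)} ψ(ξ)·(Dy(y⁻¹(ξ)))⁻¹ dξ = ∫_Ω ψ(y(x))·adj Dy(x) dx, as an identity between N×N matrices of real numbers. -/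
open MeasureTheory Filter Topology
open scoped ENNReal

/-- For an injective deformation `y` on a bounded open set `Ω`, everywhere differentiable with
positive Jacobian determinant and integrable cofactor (adjugate) matrix, and any bounded
continuous `ψ : ℝ^N → ℝ`, the function `ξ ↦ ψ(ξ) (Dy(y⁻¹ ξ))⁻¹` is integrable on `y(Ω)` and
`∫_{y(Ω)} ψ(ξ) (Dy(y⁻¹ ξ))⁻¹ dξ = ∫_Ω ψ(y x) adj Dy(x) dx`, entrywise. -/
theorem integral_inverse_gradient_eq_integral_adjugate {N : ℕ} (Ω : Set (Fin N → ℝ))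
    (hΩo : IsOpen Ω) (hΩb : Bornology.IsBounded Ω)
    (y : (Fin N → ℝ) → (Fin N → ℝ)) (hinj : Set.InjOn y Ω)
    (F : (Fin N → ℝ) → Matrix (Fin N) (Fin N) ℝ)
    (hdiff : ∀ x ∈ Ω, HasFDerivAt y ((F x).mulVecLin.toContinuousLinearMap) x)
    (hdet : ∀ x ∈ Ω, 0 < (F x).det)
    (hadj : ∀ i j, IntegrableOn (fun x => (F x).adjugate i j) Ω)
    (ψ : (Fin N → ℝ) → ℝ) (hψc : Continuous ψ) (hψb : ∃ M : ℝ, ∀ ξ, |ψ ξ| ≤ M) :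
    ∀ i j,
      IntegrableOn (fun ξ => ψ ξ * (F (Function.invFunOn y Ω ξ))⁻¹ i j) (y '' Ω) ∧
      ∫ ξ in y '' Ω, ψ ξ * (F (Function.invFunOn y Ω ξ))⁻¹ i j =
        ∫ x in Ω, ψ (y x) * (F x).adjugate i j := by
  intro i j
  have hmeas : MeasurableSet Ω := hΩo.measurableSet
  have hfd : ∀ x ∈ Ω, HasFDerivWithinAt y ((F x).mulVecLin.toContinuousLinearMap) Ω x :=
    fun x hx => (hdiff x hx).hasFDerivWithinAt
  set g : (Fin N → ℝ) → ℝ := fun ξ => ψ ξ * (F (Function.invFunOn y Ω ξ))⁻¹ i j with hg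
  have hdetC : ∀ x ∈ Ω, ((F x).mulVecLin.toContinuousLinearMap : (Fin N → ℝ) →L[ℝ] (Fin N → ℝ)).det = (F x).det := by
    intro x hx
    have : ((F x).mulVecLin.toContinuousLinearMap : (Fin N → ℝ) →L[ℝ] (Fin N → ℝ)).det
        = LinearMap.det (F x).mulVecLin := rfl
    rw [this, ← Matrix.toLin'_apply', LinearMap.det_toLin']
  -- key pointwise identity on Ω
  have hpt : ∀ x ∈ Ω,
      |((F x).mulVecLin.toContinuousLinearMap : (Fin N → ℝ) →L[ℝ] (Fin N → ℝ)).det| • g (y x)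
        = ψ (y x) * (F x).adjugate i j := by
    intro x hx
    have hinvOn : Function.invFunOn y Ω (y x) = x := hinj.leftInvOn_invFunOn hx
    have hd := hdet x hx
    have hdne : (F x).det ≠ 0 := ne_of_gt hd
    rw [hdetC x hx, abs_of_pos hd, hg]
    simp only [hinvOn, smul_eq_mul]
    rw [Matrix.inv_def, Ring.inverse_eq_inv]
    simp only [Matrix.smul_apply, smul_eq_mul]
    field_simp
  -- integrability of the RHS integrand
  have hycont : ContinuousOn y Ω := fun x hx =>
    (hdiff x hx).continuousAt.continuousWithinAt
  have hψymeas : AEStronglyMeasurable (fun x => ψ (y x)) (volume.restrict Ω) :=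
    (hψc.comp_continuousOn hycont).aestronglyMeasurable hmeas
  obtain ⟨M, hM⟩ := hψb
  have hRHSint : IntegrableOn (fun x => ψ (y x) * (F x).adjugate i j) Ω := by
    exact (hadj i j).bdd_mul (c := M) hψymeas (Filter.Eventually.of_forall fun x => hM (y x))
  have hiff := integrableOn_image_iff_integrableOn_abs_det_fderiv_smul volume hmeas hfd hinj g
  have hint : IntegrableOn g (y '' Ω) := by
    rw [hiff]
    exact hRHSint.congr_fun (fun x hx => (hpt x hx).symm) hmeas
  refine ⟨hint, ?_⟩
  rw [integral_image_eq_integral_abs_det_fderiv_smul volume hmeas hfd hinj g]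
  exact setIntegral_congr_fun hmeas hpt
end

section
/- Let Ω ⊆ ℝ^N be a bounded measurable set. Let v_n, v : Ω → ℝ^{N×N} be integrable with ∫_Ω φ·v_n dx → ∫_Ω φ·v dx for every essentially bounded measurable φ : Ω → ℝ; let y_n, y : Ω → ℝ^N be measurable with y_n → y almost everywhere in Ω; and let ψ : ℝ^N → ℝ be bounded and continuous. Then ∫_Ω ψ(y_n(x))·v_n(x) dx → ∫_Ω ψ(y(x))·v(x) dx, as a limit of N×N matrices with entrywise integrals. -/
set_option linter.unusedSectionVars false
open MeasureTheory Filter Topology Set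
open scoped ENNReal

variable {α : Type*} [MeasurableSpace α] {μ : Measure α}

variable (μ) in
/-- The set of (classes of) indicator functions in `L¹`. -/
def indicSet : Set (Lp ℝ 1 μ) := {g | ∀ᵐ x ∂μ, (g : α → ℝ) x = 0 ∨ (g : α → ℝ) x = 1}


/-- Absolute continuity of the integral. -/
lemma absCont_integral {f : α → ℝ} (hf : Integrable f μ) {ε : ℝ} (hε : 0 < ε) :
    ∃ δ : ℝ, 0 < δ ∧ ∀ s : Set α, MeasurableSet s → μ s ≤ ENNReal.ofReal δ →
      ∫ x in s, |f x| ∂μ ≤ ε := by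
  obtain ⟨δ, hδ, h⟩ := (memLp_one_iff_integrable.2 hf).eLpNorm_indicator_le le_rfl
    ENNReal.one_ne_top hε
  refine ⟨δ, hδ, fun s hs hμs => ?_⟩
  have h1 := h s hs hμs
  rw [eLpNorm_one_eq_lintegral_enorm] at h1
  simp only [enorm_eq_nnnorm] at h1
  have h2 : ∫⁻ x, ‖s.indicator f x‖₊ ∂μ = ∫⁻ x in s, ‖f x‖₊ ∂μ := by
    rw [← lintegral_indicator hs _]
    congr 1; ext x
    by_cases hx : x ∈ s <;> simp [hx]
  rw [h2] at h1
  have hint : IntegrableOn f s μ := hf.integrableOn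
  calc ∫ x in s, |f x| ∂μ = (∫⁻ x in s, ‖f x‖₊ ∂μ).toReal := by
        simp_rw [← Real.norm_eq_abs]
        exact integral_norm_eq_lintegral_enorm hint.1
    _ ≤ ε := by
        refine ENNReal.toReal_le_of_le_ofReal hε.le h1


section S
variable [IsFiniteMeasure μ]

noncomputable def indLp {A : Set α} (hA : MeasurableSet A) : Lp ℝ 1 μ :=
  indicatorConstLp 1 hA (measure_ne_top μ A) (1 : ℝ)

lemma indLp_coeFn {A : Set α} (hA : MeasurableSet A) :
    (indLp (μ := μ) hA : α → ℝ) =ᵐ[μ] A.indicator 1 := indicatorConstLp_coeFn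

lemma indLp_mem {A : Set α} (hA : MeasurableSet A) : indLp (μ := μ) hA ∈ indicSet μ := by
  filter_upwards [indLp_coeFn (μ := μ) hA] with x hx
  rw [hx]
  by_cases h : x ∈ A <;> simp [h]

lemma zero_mem_indicSet : (0 : Lp ℝ 1 μ) ∈ indicSet μ := by
  filter_upwards [Lp.coeFn_zero ℝ 1 μ] with x hx
  exact Or.inl hx

/-- integral of an indicator Lp element against w -/
lemma lam_indLp {A : Set α} (hA : MeasurableSet A) {w : α → ℝ} :
    ∫ x, (indLp (μ := μ) hA : α → ℝ) x * w x ∂μ = ∫ x in A, w x ∂μ := by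
  rw [← integral_indicator hA]
  refine integral_congr_ae ?_
  filter_upwards [indLp_coeFn (μ := μ) hA] with x hx
  rw [hx]
  by_cases h : x ∈ A <;> simp [h]

lemma dist_indLp {A B : Set α} (hA : MeasurableSet A) (hB : MeasurableSet B)
    (h : ∀ᵐ x ∂μ, (A.indicator 1 x : ℝ) = B.indicator 1 x ∨ x ∈ A \ B ∪ B \ A) :
    dist (indLp (μ := μ) hA) (indLp (μ := μ) hB) ≤ (μ (A \ B ∪ B \ A)).toReal := by
  rw [Lp.dist_def]
  have hcoe : ((indLp (μ := μ) hA : α → ℝ) - (indLp hB : Lp ℝ 1 μ) : α → ℝ) =ᵐ[μ]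
      fun x => A.indicator 1 x - B.indicator 1 x := by
    filter_upwards [indLp_coeFn (μ := μ) hA,
      indLp_coeFn (μ := μ) hB] with x h2 h3
    rw [Pi.sub_apply, h2, h3]
  rw [eLpNorm_congr_ae hcoe, eLpNorm_one_eq_lintegral_enorm]
  simp only [enorm_eq_nnnorm]
  have hle : ∫⁻ x, ‖A.indicator (1 : α → ℝ) x - B.indicator 1 x‖₊ ∂μ ≤ μ (A \ B ∪ B \ A) := by
    rw [← lintegral_indicator_one ((hA.diff hB).union (hB.diff hA))]
    refine lintegral_mono_ae ?_
    filter_upwards [h] with x hx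
    rcases hx with hx | hx
    · simp [hx]
    · have h1 : ‖A.indicator (1 : α → ℝ) x - B.indicator 1 x‖₊ ≤ 1 := by
        by_cases h2 : x ∈ A <;> by_cases h3 : x ∈ B <;>
          simp [Set.indicator_apply, h2, h3]
      calc (‖A.indicator (1 : α → ℝ) x - B.indicator 1 x‖₊ : ℝ≥0∞) ≤ 1 := by
            exact_mod_cast h1
        _ = (A \ B ∪ B \ A).indicator 1 x := by simp [hx]
  exact ENNReal.toReal_mono (measure_ne_top _ _) hle

end S

section S2
variable [IsFiniteMeasure μ]

noncomputable def lam (μ : Measure α) (w : α → ℝ) (g : Lp ℝ 1 μ) : ℝ :=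
  ∫ x, (g : α → ℝ) x * w x ∂μ

variable [IsFiniteMeasure μ]

lemma indicSet_repr {g : Lp ℝ 1 μ} (hg : g ∈ indicSet μ) :
    ∃ A : Set α, MeasurableSet A ∧ (g : α → ℝ) =ᵐ[μ] A.indicator 1 := by
  refine ⟨{x | (g : α → ℝ) x = 1},
    measurableSet_eq_fun (Lp.stronglyMeasurable g).measurable measurable_const, ?_⟩
  filter_upwards [hg] with x hx
  rcases hx with h0 | h1
  · have hne : x ∉ {x | (g : α → ℝ) x = 1} := by
      simp only [Set.mem_setOf_eq, h0]; norm_num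
    rw [Set.indicator_of_notMem hne]; exact h0
  · have hmem : x ∈ {x | (g : α → ℝ) x = 1} := h1
    rw [Set.indicator_of_mem hmem, Pi.one_apply]; exact h1

lemma indicSet_bound {g : Lp ℝ 1 μ} (hg : g ∈ indicSet μ) :
    ∀ᵐ x ∂μ, ‖(g : α → ℝ) x‖ ≤ 1 := by
  filter_upwards [hg] with x hx
  rcases hx with h | h <;> simp [h]

lemma integrable_lam {w : α → ℝ} (hw : Integrable w μ) {g : Lp ℝ 1 μ}
    (hg : g ∈ indicSet μ) : Integrable (fun x => (g : α → ℝ) x * w x) μ :=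
  hw.bdd_mul (Lp.aestronglyMeasurable g) (indicSet_bound hg)

lemma lam_dist_le {w : α → ℝ} (hw : Integrable w μ) {ε δ : ℝ}
    (hδ : ∀ s : Set α, MeasurableSet s → μ s ≤ ENNReal.ofReal δ → ∫ x in s, |w x| ∂μ ≤ ε)
    {g g' : Lp ℝ 1 μ} (hg : g ∈ indicSet μ) (hg' : g' ∈ indicSet μ)
    (hd : dist g g' ≤ δ) : |lam μ w g - lam μ w g'| ≤ ε := by
  set D : Set α := {x | ¬ ((g : α → ℝ) x = (g' : α → ℝ) x)} with hDdef
  have hD : MeasurableSet D :=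
    (measurableSet_eq_fun (Lp.stronglyMeasurable g).measurable
      (Lp.stronglyMeasurable g').measurable).compl
  have h1 : ∫⁻ x, ‖(g : α → ℝ) x - (g' : α → ℝ) x‖₊ ∂μ = μ D := by
    rw [← lintegral_indicator_one hD]
    refine lintegral_congr_ae ?_
    filter_upwards [hg, hg'] with x h2 h3
    by_cases hx : (g : α → ℝ) x = (g' : α → ℝ) x
    · have hxD : x ∉ D := by simp [hDdef, hx]
      simp [hx, hxD]
    · have hxD : x ∈ D := hx
      rcases h2 with h2 | h2 <;> rcases h3 with h3 | h3 <;>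
        first
          | (exfalso; rw [h2, h3] at hx; exact hx rfl)
          | simp [h2, h3, hxD]
  have h1' : ∫⁻ x, ‖((g : α → ℝ) - (g' : α → ℝ)) x‖₊ ∂μ = μ D := h1
  have hμD : μ D ≤ ENNReal.ofReal δ := by
    have h2 : μ D = ENNReal.ofReal (dist g g') := by
      rw [Lp.dist_def, eLpNorm_one_eq_lintegral_enorm]
      simp only [enorm_eq_nnnorm]
      rw [h1',
        ENNReal.ofReal_toReal (measure_ne_top μ D)]
    rw [h2]
    exact ENNReal.ofReal_le_ofReal hd
  have ig := integrable_lam hw hg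
  have ig' := integrable_lam hw hg'
  have heq : lam μ w g - lam μ w g' = ∫ x, ((g : α → ℝ) x - (g' : α → ℝ) x) * w x ∂μ := by
    rw [lam, lam, ← integral_sub ig ig']
    congr 1; funext x; ring
  rw [heq]
  calc |∫ x, ((g : α → ℝ) x - (g' : α → ℝ) x) * w x ∂μ|
      ≤ ∫ x, |((g : α → ℝ) x - (g' : α → ℝ) x) * w x| ∂μ := by
        simpa only [Real.norm_eq_abs] using
          norm_integral_le_integral_norm (μ := μ) fun x => ((g : α → ℝ) x - (g' : α → ℝ) x) * w x
    _ ≤ ∫ x, D.indicator (fun y => |w y|) x ∂μ := by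
        have iu : Integrable (fun x => |((g : α → ℝ) x - (g' : α → ℝ) x) * w x|) μ := by
          refine (ig.sub ig').abs.congr (Eventually.of_forall fun x => ?_)
          simp only [Pi.sub_apply]
          rw [← sub_mul]
        refine integral_mono_ae iu (hw.abs.indicator hD) ?_
        filter_upwards [hg, hg'] with x h2 h3
        by_cases hx : (g : α → ℝ) x = (g' : α → ℝ) x
        · have hxD : x ∉ D := by simp [hDdef, hx]
          simp [hx, hxD, Set.indicator_apply, abs_nonneg]
        · have hxD : x ∈ D := hx
          have hb : |(g : α → ℝ) x - (g' : α → ℝ) x| ≤ 1 := by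
            rcases h2 with h2 | h2 <;> rcases h3 with h3 | h3 <;> rw [h2, h3] <;> norm_num
          rw [abs_mul, Set.indicator_of_mem hxD]
          exact mul_le_of_le_one_left (abs_nonneg _) hb
    _ = ∫ x in D, |w x| ∂μ := integral_indicator hD
    _ ≤ ε := hδ D hD hμD

lemma isClosed_indicSet : IsClosed (indicSet μ) := by
  refine IsSeqClosed.isClosed fun g g0 hg hlim => ?_
  have h1 : TendstoInMeasure μ (fun n => ((g n : α → ℝ))) atTop (g0 : α → ℝ) :=
    tendstoInMeasure_of_tendsto_Lp hlim
  obtain ⟨ns, hns, h2⟩ := h1.exists_seq_tendsto_ae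
  have h3 : ∀ᵐ x ∂μ, (∀ n, ((g (ns n) : α → ℝ)) x = 0 ∨ ((g (ns n) : α → ℝ)) x = 1) →
      Tendsto (fun n => ((g (ns n) : α → ℝ)) x) atTop (𝓝 ((g0 : α → ℝ) x)) →
      ((g0 : α → ℝ) x = 0 ∨ (g0 : α → ℝ) x = 1) := by
    refine Eventually.of_forall fun x hx hlimx => ?_
    have hcl : IsClosed ({0, 1} : Set ℝ) := (Set.toFinite ({0, 1} : Set ℝ)).isClosed
    have : (g0 : α → ℝ) x ∈ ({0, 1} : Set ℝ) :=
      hcl.mem_of_tendsto hlimx (Eventually.of_forall fun n => by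
        rcases hx n with h | h <;> simp [h])
    simpa using this
  have h4 : ∀ᵐ x ∂μ, ∀ n, ((g (ns n) : α → ℝ)) x = 0 ∨ ((g (ns n) : α → ℝ)) x = 1 :=
    ae_all_iff.2 fun n => hg (ns n)
  filter_upwards [h3, h4, h2] with x h3x h4x h2x
  exact h3x h4x h2x

end S2

section Nikodym
variable [IsFiniteMeasure μ]

lemma abs_setIntegral_le {u : α → ℝ} (B : Set α) :
    |∫ x in B, u x ∂μ| ≤ ∫ x in B, |u x| ∂μ := by
  simpa only [Real.norm_eq_abs] using norm_integral_le_integral_norm (μ := μ.restrict B) u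

lemma nikodym_diff_small {w : ℕ → α → ℝ} {wlim : α → ℝ} (hw : ∀ n, Integrable (w n) μ)
    (hwl : Integrable wlim μ)
    (hconv : ∀ A : Set α, MeasurableSet A →
      Tendsto (fun n => ∫ x in A, w n x ∂μ) atTop (𝓝 (∫ x in A, wlim x ∂μ)))
    {ε : ℝ} (hε : 0 < ε) :
    ∃ δ : ℝ, 0 < δ ∧ ∀ n, ∀ B : Set α, MeasurableSet B → μ B ≤ ENNReal.ofReal δ →
      |∫ x in B, w n x ∂μ - ∫ x in B, wlim x ∂μ| ≤ 2 * ε := by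
  haveI : Nonempty (indicSet μ) := ⟨⟨0, zero_mem_indicSet⟩⟩
  haveI : CompleteSpace (indicSet μ) := isClosed_indicSet.completeSpace_coe
  haveI : BaireSpace (indicSet μ) := inferInstance
  -- continuity of the pairing
  have hcont : ∀ u : α → ℝ, Integrable u μ →
      Continuous (fun gg : indicSet μ => lam μ u gg.1) := by
    intro u hu
    rw [Metric.continuous_iff]
    intro b εc hεc
    obtain ⟨δ, hδpos, hδ⟩ := absCont_integral hu (half_pos hεc)
    refine ⟨δ, hδpos, fun a hab => ?_⟩
    rw [Real.dist_eq]
    refine lt_of_le_of_lt (lam_dist_le hu hδ a.2 b.2 ?_) (half_lt_self hεc)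
    rw [← Subtype.dist_eq]
    exact hab.le
  -- the closed pieces
  set F : ℕ → Set (indicSet μ) :=
    fun k => {gg | ∀ n ≥ k, |lam μ (w n) gg.1 - lam μ wlim gg.1| ≤ ε} with hF
  have hFc : ∀ k, IsClosed (F k) := by
    intro k
    have : F k = ⋂ (n : ℕ), ⋂ (_ : n ≥ k),
        {gg : indicSet μ | |lam μ (w n) gg.1 - lam μ wlim gg.1| ≤ ε} := by
      ext gg; simp [hF]
    rw [this]
    exact isClosed_iInter fun n => isClosed_iInter fun _ =>
      isClosed_le (((hcont _ (hw n)).sub (hcont _ hwl)).abs) continuous_const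
  have hFu : ⋃ k, F k = Set.univ := by
    refine Set.eq_univ_of_forall fun gg => ?_
    obtain ⟨A, hA, hrepr⟩ := indicSet_repr gg.2
    have hlamA : ∀ u : α → ℝ, lam μ u gg.1 = ∫ x in A, u x ∂μ := by
      intro u
      rw [lam, ← integral_indicator hA]
      refine integral_congr_ae ?_
      filter_upwards [hrepr] with x hx
      rw [hx]
      by_cases h : x ∈ A <;> simp [h]
    have htd : Tendsto (fun n => lam μ (w n) gg.1) atTop (𝓝 (lam μ wlim gg.1)) := by
      simp_rw [hlamA]
      exact hconv A hA
    obtain ⟨k, hk⟩ := Metric.tendsto_atTop.1 htd ε hε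
    refine Set.mem_iUnion.2 ⟨k, fun n hn => ?_⟩
    rw [← Real.dist_eq]
    exact (hk n hn).le
  obtain ⟨K, g₀, hg₀⟩ := nonempty_interior_of_iUnion_of_closed hFc hFu
  obtain ⟨r, hr, hball⟩ := Metric.mem_nhds_iff.1 (mem_interior_iff_mem_nhds.1 hg₀)
  obtain ⟨A₀, hA₀, hrepr₀⟩ := indicSet_repr g₀.2
  have hg₀eq : g₀.1 = indLp hA₀ := by
    apply Lp.ext (p := (1 : ℝ≥0∞)) (μ := μ)
    exact hrepr₀.trans (indLp_coeFn hA₀).symm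
  -- the key estimate for `n ≥ K`
  have hKpart : ∀ n ≥ K, ∀ B : Set α, MeasurableSet B → μ B ≤ ENNReal.ofReal (r / 2) →
      |∫ x in B, w n x ∂μ - ∫ x in B, wlim x ∂μ| ≤ 2 * ε := by
    intro n hn B hB hBμ
    have hrB : (μ B).toReal < r := by
      refine lt_of_le_of_lt (ENNReal.toReal_mono ENNReal.ofReal_ne_top hBμ) ?_
      rw [ENNReal.toReal_ofReal (by positivity)]
      linarith
    -- two perturbed indicator functions in the ball
    have hmem : ∀ (C : Set α) (hC : MeasurableSet C),
        (∀ x, (C.indicator 1 x : ℝ) = A₀.indicator 1 x ∨ x ∈ C \ A₀ ∪ A₀ \ C) →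
        C \ A₀ ∪ A₀ \ C ⊆ B →
        (⟨indLp hC, indLp_mem hC⟩ : indicSet μ) ∈ F K := by
      intro C hC hptw hsub
      refine hball ?_
      rw [Metric.mem_ball, Subtype.dist_eq, hg₀eq]
      refine lt_of_le_of_lt (dist_indLp hC hA₀ (Eventually.of_forall hptw)) ?_
      refine lt_of_le_of_lt ?_ hrB
      exact ENNReal.toReal_mono (measure_ne_top _ _) (measure_mono hsub)
    have h₁ : (⟨indLp (hA₀.union hB), indLp_mem _⟩ : indicSet μ) ∈ F K := by
      refine hmem _ _ (fun x => ?_) ?_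
      · by_cases h2 : x ∈ A₀ <;> by_cases h3 : x ∈ B <;>
          simp [Set.indicator_apply, h2, h3]
      · intro x hx
        rcases hx with hx | hx
        · rcases hx.1 with h | h
          · exact absurd h hx.2
          · exact h
        · exact absurd (Or.inl hx.1) hx.2
    have h₂ : (⟨indLp (hA₀.diff hB), indLp_mem _⟩ : indicSet μ) ∈ F K := by
      refine hmem _ _ (fun x => ?_) ?_
      · by_cases h2 : x ∈ A₀ <;> by_cases h3 : x ∈ B <;>
          simp [Set.indicator_apply, h2, h3]
      · intro x hx
        rcases hx with hx | hx
        · exact absurd hx.1.1 hx.2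
        · exact not_not.1 fun hB' => hx.2 ⟨hx.1, hB'⟩
    have e₁ : |∫ x in A₀ ∪ B, w n x ∂μ - ∫ x in A₀ ∪ B, wlim x ∂μ| ≤ ε := by
      have := h₁ n hn
      rwa [show lam μ (w n) ((⟨indLp (hA₀.union hB), indLp_mem _⟩ : indicSet μ) : Lp ℝ 1 μ)
          = ∫ x in A₀ ∪ B, w n x ∂μ from lam_indLp (hA₀.union hB),
        show lam μ wlim ((⟨indLp (hA₀.union hB), indLp_mem _⟩ : indicSet μ) : Lp ℝ 1 μ)
          = ∫ x in A₀ ∪ B, wlim x ∂μ from lam_indLp (hA₀.union hB)] at this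
    have e₂ : |∫ x in A₀ \ B, w n x ∂μ - ∫ x in A₀ \ B, wlim x ∂μ| ≤ ε := by
      have := h₂ n hn
      rwa [show lam μ (w n) ((⟨indLp (hA₀.diff hB), indLp_mem _⟩ : indicSet μ) : Lp ℝ 1 μ)
          = ∫ x in A₀ \ B, w n x ∂μ from lam_indLp (hA₀.diff hB),
        show lam μ wlim ((⟨indLp (hA₀.diff hB), indLp_mem _⟩ : indicSet μ) : Lp ℝ 1 μ)
          = ∫ x in A₀ \ B, wlim x ∂μ from lam_indLp (hA₀.diff hB)] at this
    have hsplit : ∀ u : α → ℝ, Integrable u μ →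
        ∫ x in A₀ ∪ B, u x ∂μ = ∫ x in A₀ \ B, u x ∂μ + ∫ x in B, u x ∂μ := by
      intro u hu
      rw [← Set.diff_union_self,
        setIntegral_union disjoint_sdiff_self_left hB hu.integrableOn hu.integrableOn]
    have q₁ := hsplit (w n) (hw n)
    have q₂ := hsplit wlim hwl
    have key : ∫ x in B, w n x ∂μ - ∫ x in B, wlim x ∂μ =
        (∫ x in A₀ ∪ B, w n x ∂μ - ∫ x in A₀ ∪ B, wlim x ∂μ) -
        (∫ x in A₀ \ B, w n x ∂μ - ∫ x in A₀ \ B, wlim x ∂μ) := by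
      rw [q₁, q₂]; ring
    rw [key]
    calc |_ - _| ≤ |∫ x in A₀ ∪ B, w n x ∂μ - ∫ x in A₀ ∪ B, wlim x ∂μ| +
        |∫ x in A₀ \ B, w n x ∂μ - ∫ x in A₀ \ B, wlim x ∂μ| := abs_sub _ _
      _ ≤ 2 * ε := by linarith
  -- the finitely many remaining indices
  have hsingle : ∀ n : ℕ, ∃ δ : ℝ, 0 < δ ∧ ∀ B : Set α, MeasurableSet B →
      μ B ≤ ENNReal.ofReal δ → |∫ x in B, w n x ∂μ - ∫ x in B, wlim x ∂μ| ≤ 2 * ε := by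
    intro n
    obtain ⟨δ₁, hδ₁, h₁⟩ := absCont_integral (hw n) hε
    obtain ⟨δ₂, hδ₂, h₂⟩ := absCont_integral hwl hε
    refine ⟨min δ₁ δ₂, lt_min hδ₁ hδ₂, fun B hBm hBμ => ?_⟩
    have e₁ := (abs_setIntegral_le (μ := μ) (u := w n) B).trans
      (h₁ B hBm (hBμ.trans (ENNReal.ofReal_le_ofReal (min_le_left _ _))))
    have e₂ := (abs_setIntegral_le (μ := μ) (u := wlim) B).trans
      (h₂ B hBm (hBμ.trans (ENNReal.ofReal_le_ofReal (min_le_right _ _))))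
    calc |∫ x in B, w n x ∂μ - ∫ x in B, wlim x ∂μ|
        ≤ |∫ x in B, w n x ∂μ| + |∫ x in B, wlim x ∂μ| := abs_sub _ _
      _ ≤ 2 * ε := by linarith
  have hfin : ∀ K' : ℕ, ∃ δ : ℝ, 0 < δ ∧ ∀ n < K', ∀ B : Set α, MeasurableSet B →
      μ B ≤ ENNReal.ofReal δ → |∫ x in B, w n x ∂μ - ∫ x in B, wlim x ∂μ| ≤ 2 * ε := by
    intro K'
    induction K' with
    | zero => exact ⟨1, one_pos, fun n hn => absurd hn (Nat.not_lt_zero n)⟩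
    | succ K' ih =>
      obtain ⟨δ₁, hδ₁, h₁⟩ := ih
      obtain ⟨δ₂, hδ₂, h₂⟩ := hsingle K'
      refine ⟨min δ₁ δ₂, lt_min hδ₁ hδ₂, fun n hn B hBm hBμ => ?_⟩
      rcases Nat.lt_succ_iff_lt_or_eq.1 hn with h | rfl
      · exact h₁ n h B hBm (hBμ.trans (ENNReal.ofReal_le_ofReal (min_le_left _ _)))
      · exact h₂ B hBm (hBμ.trans (ENNReal.ofReal_le_ofReal (min_le_right _ _)))
  obtain ⟨δ₁, hδ₁, h₁⟩ := hfin K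
  refine ⟨min δ₁ (r / 2), lt_min hδ₁ (by positivity), fun n B hBm hBμ => ?_⟩
  rcases lt_or_ge n K with h | h
  · exact h₁ n h B hBm (hBμ.trans (ENNReal.ofReal_le_ofReal (min_le_left _ _)))
  · exact hKpart n h B hBm (hBμ.trans (ENNReal.ofReal_le_ofReal (min_le_right _ _)))

end Nikodym

section UI
variable [IsFiniteMeasure μ]

lemma nikodym_UI {w : ℕ → α → ℝ} {wlim : α → ℝ} (hw : ∀ n, Integrable (w n) μ)
    (hwl : Integrable wlim μ)
    (hconv : ∀ A : Set α, MeasurableSet A →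
      Tendsto (fun n => ∫ x in A, w n x ∂μ) atTop (𝓝 (∫ x in A, wlim x ∂μ)))
    {ε : ℝ} (hε : 0 < ε) :
    ∃ δ : ℝ, 0 < δ ∧ ∀ n, ∀ B : Set α, MeasurableSet B → μ B ≤ ENNReal.ofReal δ →
      ∫ x in B, |w n x| ∂μ ≤ ε := by
  have hε5 : 0 < ε / 5 := by linarith
  obtain ⟨δ₁, hδ₁, h₁⟩ := nikodym_diff_small hw hwl hconv hε5
  obtain ⟨δ₂, hδ₂, h₂⟩ := absCont_integral hwl hε5
  refine ⟨min δ₁ δ₂, lt_min hδ₁ hδ₂, fun n B hBm hBμ => ?_⟩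
  have hBμ₁ : μ B ≤ ENNReal.ofReal δ₁ :=
    hBμ.trans (ENNReal.ofReal_le_ofReal (min_le_left _ _))
  have hBμ₂ : μ B ≤ ENNReal.ofReal δ₂ :=
    hBμ.trans (ENNReal.ofReal_le_ofReal (min_le_right _ _))
  set u : α → ℝ := fun x => w n x - wlim x with hu_def
  have hu : Integrable u μ := (hw n).sub hwl
  set m : α → ℝ := hu.1.mk u with hm_def
  have hmm : StronglyMeasurable m := hu.1.stronglyMeasurable_mk
  have hum : u =ᵐ[μ] m := hu.1.ae_eq_mk
  set P : Set α := {x | 0 ≤ m x} with hP_def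
  have hPm : MeasurableSet P := measurableSet_le measurable_const hmm.measurable
  -- the diff bound on arbitrary small measurable sets
  have hdiff : ∀ A : Set α, MeasurableSet A → A ⊆ B → |∫ x in A, u x ∂μ| ≤ 2 * (ε / 5) := by
    intro A hAm hAB
    have : ∫ x in A, u x ∂μ = ∫ x in A, w n x ∂μ - ∫ x in A, wlim x ∂μ :=
      integral_sub (hw n).integrableOn hwl.integrableOn
    rw [this]
    exact h₁ n A hAm ((measure_mono hAB).trans hBμ₁)
  -- split B by the sign of u
  have hsplit : ∫ x in B, |u x| ∂μ =
      ∫ x in B ∩ P, |u x| ∂μ + ∫ x in B ∩ Pᶜ, |u x| ∂μ := by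
    conv_lhs => rw [← Set.inter_union_compl B P]
    exact setIntegral_union (Disjoint.mono inf_le_right inf_le_right disjoint_compl_right)
      (hBm.inter hPm.compl) hu.abs.integrableOn hu.abs.integrableOn
  have e₁ : ∫ x in B ∩ P, |u x| ∂μ ≤ 2 * (ε / 5) := by
    have heq : ∫ x in B ∩ P, |u x| ∂μ = ∫ x in B ∩ P, u x ∂μ := by
      refine integral_congr_ae ?_
      filter_upwards [ae_restrict_mem (hBm.inter hPm), ae_restrict_of_ae hum] with x hx hx2
      rw [abs_of_nonneg]
      rw [hx2]
      exact hx.2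
    rw [heq]
    exact (le_abs_self _).trans (hdiff _ (hBm.inter hPm) Set.inter_subset_left)
  have e₂ : ∫ x in B ∩ Pᶜ, |u x| ∂μ ≤ 2 * (ε / 5) := by
    have heq : ∫ x in B ∩ Pᶜ, |u x| ∂μ = - ∫ x in B ∩ Pᶜ, u x ∂μ := by
      rw [← integral_neg]
      refine integral_congr_ae ?_
      filter_upwards [ae_restrict_mem (hBm.inter hPm.compl), ae_restrict_of_ae hum]
        with x hx hx2
      rw [abs_of_nonpos]
      rw [hx2]
      exact le_of_lt (not_le.1 hx.2)
    rw [heq]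
    exact (neg_le_abs _).trans (hdiff _ (hBm.inter hPm.compl) Set.inter_subset_left)
  have e₃ : ∫ x in B, |u x| ∂μ ≤ 4 * (ε / 5) := by rw [hsplit]; linarith
  have e₄ : ∫ x in B, |w n x| ∂μ ≤ ∫ x in B, |u x| ∂μ + ∫ x in B, |wlim x| ∂μ := by
    rw [← integral_add hu.abs.integrableOn hwl.abs.integrableOn]
    refine integral_mono (hw n).abs.integrableOn
      (hu.abs.integrableOn.add hwl.abs.integrableOn) fun x => ?_
    have : w n x = u x + wlim x := by simp [hu_def]
    rw [this]
    exact abs_add_le _ _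
  have e₅ := h₂ B hBm hBμ₂
  linarith

end UI
lemma exists_cover_slabs {N : ℕ} {Ω : Set (Fin (N+1) → ℝ)} (hΩb : Bornology.IsBounded Ω)
    {δ : ℝ} (hδ : 0 < δ) :
    ∃ (K : ℕ) (T : ℕ → Set (Fin (N+1) → ℝ)),
      (∀ j, MeasurableSet (T j)) ∧
      (∀ j, volume.restrict Ω (T j) ≤ ENNReal.ofReal δ) ∧
      (Ω ⊆ ⋃ j ∈ Finset.range K, T j) ∧
      ((↑(Finset.range K) : Set ℕ).Pairwise (Function.onFun Disjoint T)) := by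
  obtain ⟨r, hr⟩ := hΩb.subset_closedBall 0
  set R : ℝ := max r 1 with hR
  have hR1 : (0:ℝ) < R := lt_of_lt_of_le one_pos (le_max_right _ _)
  have hcoord : ∀ x ∈ Ω, ∀ i, |x i| ≤ R := by
    intro x hx i
    have h1 : ‖x‖ ≤ r := by
      have := hr hx
      rwa [Metric.mem_closedBall, dist_zero_right] at this
    calc |x i| = ‖x i‖ := (Real.norm_eq_abs _).symm
      _ ≤ ‖x‖ := norm_le_pi_norm x i
      _ ≤ R := h1.trans (le_max_left _ _)
  set s : ℝ := δ / ((2*R)^N + 1) with hs_def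
  have h2RN : (0:ℝ) < (2*R)^N + 1 := by positivity
  have hs : 0 < s := div_pos hδ h2RN
  have hsδ : s * (2*R)^N ≤ δ := by
    rw [hs_def, div_mul_eq_mul_div, div_le_iff₀ h2RN]
    nlinarith [pow_pos (by linarith : (0:ℝ) < 2*R) N]
  set T : ℕ → Set (Fin (N+1) → ℝ) :=
    fun j => {x | -R + j*s ≤ x 0 ∧ x 0 < -R + (j+1)*s} with hT_def
  have hTm : ∀ j, MeasurableSet (T j) := by
    intro j
    exact (measurableSet_le measurable_const (measurable_pi_apply 0)).inter
      (measurableSet_lt (measurable_pi_apply 0) measurable_const)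
  refine ⟨⌈2*R/s⌉₊ + 1, T, hTm, ?_, ?_, ?_⟩
  · -- measure bound
    intro j
    rw [Measure.restrict_apply (hTm j)]
    set f : Fin (N+1) → Set ℝ :=
      Fin.cons (Ico (-R + j*s) (-R + (j+1)*s)) (fun _ => Icc (-R) R) with hf_def
    have hsub : T j ∩ Ω ⊆ Set.pi Set.univ f := by
      intro x hx
      rw [Set.mem_univ_pi]
      intro i
      refine Fin.cases ?_ ?_ i
      · rw [hf_def, Fin.cons_zero]
        exact ⟨hx.1.1, hx.1.2⟩
      · intro k
        rw [hf_def, Fin.cons_succ]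
        have := hcoord x hx.2 k.succ
        exact abs_le.1 this
    refine (measure_mono hsub).trans ?_
    rw [volume_pi_pi]
    have h0 : volume (f 0) = ENNReal.ofReal s := by
      rw [hf_def, Fin.cons_zero, Real.volume_Ico]
      congr 1
      ring
    have hsucc : ∀ k : Fin N, volume (f k.succ) = ENNReal.ofReal (2*R) := by
      intro k
      rw [hf_def, Fin.cons_succ, Real.volume_Icc]
      congr 1
      ring
    rw [Fin.prod_univ_succ, h0]
    have : ∏ k : Fin N, volume (f k.succ) = (ENNReal.ofReal (2*R))^N := by
      rw [Finset.prod_congr rfl fun k _ => hsucc k, Finset.prod_const, Finset.card_univ,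
        Fintype.card_fin]
    rw [this, ← ENNReal.ofReal_pow (by linarith), ← ENNReal.ofReal_mul hs.le]
    exact ENNReal.ofReal_le_ofReal hsδ
  · -- cover
    intro x hx
    have h0 : |x 0| ≤ R := hcoord x hx 0
    have h1 : 0 ≤ (x 0 + R) / s := by
      apply div_nonneg _ hs.le
      have := (abs_le.1 h0).1
      linarith
    set j : ℕ := ⌊(x 0 + R) / s⌋₊ with hj_def
    have hj1 : (j:ℝ) ≤ (x 0 + R) / s := Nat.floor_le h1
    have hj2 : (x 0 + R) / s < j + 1 := Nat.lt_floor_add_one _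
    have hmem : x ∈ T j := by
      constructor
      · have : (j:ℝ) * s ≤ x 0 + R := by
          rw [← le_div_iff₀ hs]
          exact hj1
        linarith
      · have : x 0 + R < ((j:ℝ) + 1) * s := by
          rw [← div_lt_iff₀ hs]
          exact hj2
        linarith
    have hjK : j < ⌈2*R/s⌉₊ + 1 := by
      have hle : (j:ℝ) ≤ 2*R/s := by
        refine hj1.trans ?_
        have hx0 : x 0 + R ≤ 2*R := by
          have := (abs_le.1 h0).2
          linarith
        exact by gcongr
      have : j ≤ ⌈2*R/s⌉₊ := by
        have h2 : (j:ℝ) ≤ (⌈2*R/s⌉₊ : ℝ) := hle.trans (Nat.le_ceil _)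
        exact_mod_cast h2
      omega
    exact Set.mem_biUnion (Finset.mem_range.2 hjK) hmem
  · -- pairwise disjoint
    have key : ∀ j j' : ℕ, j < j' → Disjoint (T j) (T j') := by
      intro j j' hjj'
      rw [Set.disjoint_left]
      intro x hx hx'
      have h1 : x 0 < -R + (j+1)*s := hx.2
      have h2 : -R + j'*s ≤ x 0 := hx'.1
      have h3 : (j:ℝ) + 1 ≤ j' := by exact_mod_cast hjj'
      nlinarith
    intro j _ j' _ hne
    rcases hne.lt_or_gt with h | h
    · exact key _ _ h
    · exact (key _ _ h).symm

/-- Weak–strong product convergence: if `vₙ → v` weakly in `L¹(Ω; ℝ^{N×N})` and `yₙ → y`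
a.e. in `Ω`, then for every bounded continuous `ψ : ℝ^N → ℝ` one has
`∫_Ω ψ(yₙ) vₙ dx → ∫_Ω ψ(y) v dx` entrywise. -/
theorem tendsto_integral_weak_strong_product {N : ℕ} (Ω : Set (Fin N → ℝ))
    (hΩm : MeasurableSet Ω) (hΩb : Bornology.IsBounded Ω)
    (v : ℕ → (Fin N → ℝ) → Matrix (Fin N) (Fin N) ℝ)
    (vlim : (Fin N → ℝ) → Matrix (Fin N) (Fin N) ℝ)
    (hv_int : ∀ n i j, IntegrableOn (fun x => v n x i j) Ω)
    (hvlim_int : ∀ i j, IntegrableOn (fun x => vlim x i j) Ω)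
    (hweak : ∀ φ : (Fin N → ℝ) → ℝ, Measurable φ →
      (∃ M : ℝ, ∀ᵐ x ∂(volume.restrict Ω), |φ x| ≤ M) →
      ∀ i j, Tendsto (fun n => ∫ x in Ω, φ x * v n x i j) atTop
        (𝓝 (∫ x in Ω, φ x * vlim x i j)))
    (y : ℕ → (Fin N → ℝ) → (Fin N → ℝ)) (ylim : (Fin N → ℝ) → (Fin N → ℝ))
    (hy_meas : ∀ n, Measurable (y n)) (hylim_meas : Measurable ylim)
    (hyae : ∀ᵐ x ∂(volume.restrict Ω), Tendsto (fun n => y n x) atTop (𝓝 (ylim x)))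
    (ψ : (Fin N → ℝ) → ℝ) (hψc : Continuous ψ) (hψb : ∃ M : ℝ, ∀ ξ, |ψ ξ| ≤ M) :
    ∀ i j, Tendsto (fun n => ∫ x in Ω, ψ (y n x) * v n x i j) atTop
      (𝓝 (∫ x in Ω, ψ (ylim x) * vlim x i j)) := by
  obtain _ | N := N
  · intro i j; exact i.elim0
  intro i j
  haveI hfin : IsFiniteMeasure (volume.restrict Ω) := ⟨by
    rw [Measure.restrict_apply_univ]
    exact hΩb.measure_lt_top⟩
  obtain ⟨M, hM⟩ := hψb
  have hM0 : 0 ≤ M := (abs_nonneg _).trans (hM 0)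
  set w : ℕ → (Fin (N+1) → ℝ) → ℝ := fun n x => v n x i j with hw_def
  set wlim : (Fin (N+1) → ℝ) → ℝ := fun x => vlim x i j with hwlim_def
  have hw : ∀ n, Integrable (w n) (volume.restrict Ω) := fun n => hv_int n i j
  have hwl : Integrable wlim (volume.restrict Ω) := hvlim_int i j
  -- setwise convergence from the weak hypothesis
  have hconv : ∀ A : Set (Fin (N+1) → ℝ), MeasurableSet A →
      Tendsto (fun n => ∫ x in A, w n x ∂(volume.restrict Ω)) atTop
      (𝓝 (∫ x in A, wlim x ∂(volume.restrict Ω))) := by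
    intro A hA
    have hφm : Measurable (A.indicator (1 : (Fin (N+1) → ℝ) → ℝ)) :=
      measurable_one.indicator hA
    have hb : ∃ M₁ : ℝ, ∀ᵐ x ∂(volume.restrict Ω),
        |A.indicator (1 : (Fin (N+1) → ℝ) → ℝ) x| ≤ M₁ := by
      refine ⟨1, Eventually.of_forall fun x => ?_⟩
      by_cases h : x ∈ A <;> simp [h]
    have h := hweak _ hφm hb i j
    have hrw : ∀ u : (Fin (N+1) → ℝ) → ℝ,
        (∫ x in Ω, A.indicator (1 : (Fin (N+1) → ℝ) → ℝ) x * u x) =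
        ∫ x in A, u x ∂(volume.restrict Ω) := by
      intro u
      rw [← integral_indicator hA]
      refine integral_congr_ae (Eventually.of_forall fun x => ?_)
      by_cases h : x ∈ A <;> simp [h]
    simpa only [hrw] using h
  -- strong measurability of the composed functions
  have hfm : ∀ n, StronglyMeasurable (fun x => ψ (y n x)) :=
    fun n => (hψc.measurable.comp (hy_meas n)).stronglyMeasurable
  have hgm : StronglyMeasurable (fun x => ψ (ylim x)) :=
    (hψc.measurable.comp hylim_meas).stronglyMeasurable
  -- integrability of the products
  have hint1 : ∀ n, Integrable (fun x => ψ (y n x) * w n x) (volume.restrict Ω) :=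
    fun n => (hw n).bdd_mul (hfm n).aestronglyMeasurable
      (Eventually.of_forall fun x => by
        simpa only [Real.norm_eq_abs] using hM (y n x))
  have hint2 : ∀ n, Integrable (fun x => ψ (ylim x) * w n x) (volume.restrict Ω) :=
    fun n => (hw n).bdd_mul hgm.aestronglyMeasurable
      (Eventually.of_forall fun x => by
        simpa only [Real.norm_eq_abs] using hM (ylim x))
  have hintd : ∀ n, Integrable (fun x => (ψ (y n x) - ψ (ylim x)) * w n x)
      (volume.restrict Ω) :=
    fun n => (hw n).bdd_mul ((hfm n).sub hgm).aestronglyMeasurable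
      (Eventually.of_forall fun x => by
        rw [Real.norm_eq_abs]
        calc |ψ (y n x) - ψ (ylim x)| ≤ |ψ (y n x)| + |ψ (ylim x)| := abs_sub _ _
          _ ≤ 2 * M := by have := hM (y n x); have := hM (ylim x); linarith)
  -- decomposition
  have hdecomp : ∀ n, (∫ x in Ω, ψ (y n x) * v n x i j) =
      (∫ x, (ψ (y n x) - ψ (ylim x)) * w n x ∂(volume.restrict Ω)) +
      (∫ x in Ω, ψ (ylim x) * v n x i j) := by
    intro n
    have : ∫ x, (ψ (y n x) - ψ (ylim x)) * w n x ∂(volume.restrict Ω) =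
        (∫ x, ψ (y n x) * w n x ∂(volume.restrict Ω)) -
        (∫ x, ψ (ylim x) * w n x ∂(volume.restrict Ω)) := by
      rw [← integral_sub (hint1 n) (hint2 n)]
      congr 1; funext x; ring
    rw [this]
    ring
  have hψw := hweak (fun x => ψ (ylim x)) (hψc.measurable.comp hylim_meas)
    ⟨M, Eventually.of_forall fun x => hM (ylim x)⟩ i j
  -- the key: the correction term goes to zero
  have hF : Tendsto (fun n => ∫ x, (ψ (y n x) - ψ (ylim x)) * w n x ∂(volume.restrict Ω))
      atTop (𝓝 0) := by
    rw [Metric.tendsto_nhds]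
    intro ε hε
    set ε₂ : ℝ := ε / (4 * (M + 1)) with hε₂_def
    have hε₂pos : 0 < ε₂ := by positivity
    obtain ⟨δ, hδpos, hUI⟩ := nikodym_UI hw hwl hconv hε₂pos
    obtain ⟨K, T, hTm, hTμ, hTcov, hTdisj⟩ := exists_cover_slabs hΩb hδpos
    -- uniform L¹ bound
    have hC : ∀ n, ∫ x, |w n x| ∂(volume.restrict Ω) ≤ (K : ℝ) * ε₂ := by
      intro n
      set U : Set (Fin (N+1) → ℝ) := ⋃ j ∈ Finset.range K, T j with hU_def
      have hUm : MeasurableSet U := (Finset.range K).measurableSet_biUnion fun j _ => hTm j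
      have h1 : (∫ x in U, |w n x| ∂(volume.restrict Ω)) +
          (∫ x in Uᶜ, |w n x| ∂(volume.restrict Ω)) =
          ∫ x, |w n x| ∂(volume.restrict Ω) := integral_add_compl hUm (hw n).abs
      have h2 : ∫ x in Uᶜ, |w n x| ∂(volume.restrict Ω) = 0 := by
        have hz : (volume.restrict Ω) Uᶜ = 0 := by
          rw [Measure.restrict_apply hUm.compl]
          have : Uᶜ ∩ Ω = ∅ := by
            rw [Set.eq_empty_iff_forall_notMem]
            intro x hx
            exact hx.1 (hTcov hx.2)
          rw [this, measure_empty]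
        rw [Measure.restrict_eq_zero.2 hz, integral_zero_measure]
      have h3 : ∫ x in U, |w n x| ∂(volume.restrict Ω) =
          ∑ j ∈ Finset.range K, ∫ x in T j, |w n x| ∂(volume.restrict Ω) :=
        integral_biUnion_finset (Finset.range K) (fun j _ => hTm j) hTdisj
          (fun j _ => (hw n).abs.integrableOn)
      have h4 : ∑ j ∈ Finset.range K, ∫ x in T j, |w n x| ∂(volume.restrict Ω) ≤
          (K : ℝ) * ε₂ := by
        calc ∑ j ∈ Finset.range K, ∫ x in T j, |w n x| ∂(volume.restrict Ω)
            ≤ ∑ _j ∈ Finset.range K, ε₂ :=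
              Finset.sum_le_sum fun j _ => hUI n (T j) (hTm j) (hTμ j)
          _ = (K : ℝ) * ε₂ := by
              rw [Finset.sum_const, Finset.card_range, nsmul_eq_mul]
      linarith [h1, h2, h3.symm ▸ h4]
    -- Egorov
    have hae2 : ∀ᵐ x ∂(volume.restrict Ω),
        Tendsto (fun n => ψ (y n x)) atTop (𝓝 (ψ (ylim x))) := by
      filter_upwards [hyae] with x hx using (hψc.tendsto _).comp hx
    obtain ⟨t, htm, htμ, hunif⟩ :=
      tendstoUniformlyOn_of_ae_tendsto' hfm hgm hae2 hδpos
    set η : ℝ := ε / (4 * ((K : ℝ) * ε₂ + 1)) with hη_def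
    have hKε₂ : 0 ≤ (K : ℝ) * ε₂ := by positivity
    have hηpos : 0 < η := by positivity
    filter_upwards [Metric.tendstoUniformlyOn_iff.1 hunif η hηpos] with n hn
    rw [Real.dist_eq, sub_zero]
    -- split the integral over t and tᶜ
    have hsplit : (∫ x in t, |(ψ (y n x) - ψ (ylim x)) * w n x| ∂(volume.restrict Ω)) +
        (∫ x in tᶜ, |(ψ (y n x) - ψ (ylim x)) * w n x| ∂(volume.restrict Ω)) =
        ∫ x, |(ψ (y n x) - ψ (ylim x)) * w n x| ∂(volume.restrict Ω) :=
      integral_add_compl htm (hintd n).abs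
    have e₁ : ∫ x in t, |(ψ (y n x) - ψ (ylim x)) * w n x| ∂(volume.restrict Ω) ≤
        2 * M * ε₂ := by
      have step : ∫ x in t, |(ψ (y n x) - ψ (ylim x)) * w n x| ∂(volume.restrict Ω) ≤
          ∫ x in t, 2 * M * |w n x| ∂(volume.restrict Ω) := by
        refine integral_mono (hintd n).abs.integrableOn
          (((hw n).abs.const_mul (2 * M)).integrableOn) fun x => ?_
        rw [abs_mul]
        have hb : |ψ (y n x) - ψ (ylim x)| ≤ 2 * M := by
          calc |ψ (y n x) - ψ (ylim x)| ≤ |ψ (y n x)| + |ψ (ylim x)| := abs_sub _ _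
            _ ≤ 2 * M := by have := hM (y n x); have := hM (ylim x); linarith
        exact mul_le_mul_of_nonneg_right hb (abs_nonneg _)
      refine step.trans ?_
      rw [integral_const_mul]
      have := hUI n t htm htμ
      nlinarith
    have e₂ : ∫ x in tᶜ, |(ψ (y n x) - ψ (ylim x)) * w n x| ∂(volume.restrict Ω) ≤
        η * ((K : ℝ) * ε₂) := by
      have step : ∫ x in tᶜ, |(ψ (y n x) - ψ (ylim x)) * w n x| ∂(volume.restrict Ω) ≤
          ∫ x in tᶜ, η * |w n x| ∂(volume.restrict Ω) := by
        refine integral_mono_ae (hintd n).abs.integrableOn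
          (((hw n).abs.const_mul η).integrableOn) ?_
        filter_upwards [ae_restrict_mem htm.compl] with x hx
        rw [abs_mul]
        have hb : |ψ (y n x) - ψ (ylim x)| ≤ η := by
          have := hn x hx
          rw [Real.dist_eq] at this
          rw [abs_sub_comm]
          exact this.le
        exact mul_le_mul_of_nonneg_right hb (abs_nonneg _)
      refine step.trans ?_
      rw [integral_const_mul]
      have h5 : ∫ x in tᶜ, |w n x| ∂(volume.restrict Ω) ≤
          ∫ x, |w n x| ∂(volume.restrict Ω) :=
        setIntegral_le_integral (hw n).abs (Eventually.of_forall fun x => abs_nonneg _)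
      exact mul_le_mul_of_nonneg_left (h5.trans (hC n)) hηpos.le
    have habs : |∫ x, (ψ (y n x) - ψ (ylim x)) * w n x ∂(volume.restrict Ω)| ≤
        ∫ x, |(ψ (y n x) - ψ (ylim x)) * w n x| ∂(volume.restrict Ω) := by
      simpa only [Real.norm_eq_abs] using
        norm_integral_le_integral_norm (μ := volume.restrict Ω)
          fun x => (ψ (y n x) - ψ (ylim x)) * w n x
    have hbd1 : 2 * M * ε₂ ≤ ε / 2 := by
      rw [hε₂_def, ← mul_div_assoc,
        div_le_div_iff₀ (by positivity : (0:ℝ) < 4*(M+1)) (by norm_num : (0:ℝ) < 2)]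
      nlinarith
    have hbd2 : η * ((K : ℝ) * ε₂) ≤ ε / 4 := by
      rw [hη_def, div_mul_eq_mul_div,
        div_le_div_iff₀ (by positivity : (0:ℝ) < 4*((K:ℝ)*ε₂+1)) (by norm_num : (0:ℝ) < 4)]
      nlinarith
    calc |∫ x, (ψ (y n x) - ψ (ylim x)) * w n x ∂(volume.restrict Ω)|
        ≤ ∫ x, |(ψ (y n x) - ψ (ylim x)) * w n x| ∂(volume.restrict Ω) := habs
      _ = (∫ x in t, |(ψ (y n x) - ψ (ylim x)) * w n x| ∂(volume.restrict Ω)) +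
          (∫ x in tᶜ, |(ψ (y n x) - ψ (ylim x)) * w n x| ∂(volume.restrict Ω)) :=
            hsplit.symm
      _ ≤ 2 * M * ε₂ + η * ((K : ℝ) * ε₂) := add_le_add e₁ e₂
      _ ≤ ε / 2 + ε / 4 := add_le_add hbd1 hbd2
      _ < ε := by linarith
  have hsum := hF.add hψw
  rw [zero_add] at hsum
  exact hsum.congr fun n => (hdecomp n).symm
end

section
/- Let E_n, E ⊆ ℝ^N be Lebesgue measurable sets with E of finite measure and with the measure of the symmetric difference E_n Δ E tending to 0 as n → ∞. Let u_n, u : ℝ^N → ℝ^m be integrable with: u_n = 0 almost everywhere on ℝ^N \ E_n for every n; sup_n ∫_{ℝ^N} |u_n| dξ < ∞; the family (u_n)_n uniformly integrable, i.e., for every ε > 0 there is δ > 0 such that sup_n ∫_A |u_n| dξ < ε whenever A has measure less than δ; and ∫_{ℝ^N} ψ·u_n dξ → ∫_{ℝ^N} ψ·u dξ for every bounded continuous ψ : ℝ^N → ℝ. Then ∫_{ℝ^N} φ·u_n dξ → ∫_{ℝ^N} φ·u dξ for every essentially bounded measurable φ : ℝ^N → ℝ. -/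
open MeasureTheory Filter Topology Set
open scoped ENNReal symmDiff


lemma my_clamp_abs (M a b : ℝ) (hM : 0 ≤ M) (ha : |a| ≤ M) :
    |a - max (-M) (min M b)| ≤ |a - b| := by
  rcases abs_le.1 ha with ⟨h1, h2⟩
  rcases le_total b (-M) with hb | hb
  · have hbM : b ≤ M := hb.trans (by linarith)
    rw [min_eq_right hbM, max_eq_left hb, abs_of_nonneg (by linarith),
      abs_of_nonneg (by linarith)]
    linarith
  · rcases le_total M b with hb2 | hb2
    · rw [min_eq_left hb2, max_eq_right (by linarith), abs_of_nonpos (by linarith),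
        abs_of_nonpos (by linarith)]
      linarith
    · rw [min_eq_right hb2, max_eq_right hb]

lemma my_absCont {α : Type*} [MeasurableSpace α] {V : Type*} [NormedAddCommGroup V]
    {μ : Measure α} {f : α → V} (hf : Integrable f μ) {ε : ℝ} (hε : 0 < ε) :
    ∃ δ : ℝ, 0 < δ ∧ ∀ A : Set α, MeasurableSet A → μ A < ENNReal.ofReal δ →
      ∫ x in A, ‖f x‖ ∂μ < ε := by
  obtain ⟨δ, hδ, h⟩ := (memLp_one_iff_integrable.2 hf).eLpNorm_indicator_le le_rfl
    ENNReal.one_ne_top (half_pos hε)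
  refine ⟨δ, hδ, fun A hA hAδ => ?_⟩
  have h1 := h A hA hAδ.le
  rw [eLpNorm_one_eq_lintegral_enorm] at h1
  have h2 : ∫ x in A, ‖f x‖ ∂μ = (∫⁻ x, ‖A.indicator f x‖ₑ ∂μ).toReal := by
    rw [← integral_norm_eq_lintegral_enorm ((hf.aestronglyMeasurable).indicator hA),
      ← integral_indicator hA]
    congr 1
    ext x
    rw [norm_indicator_eq_indicator_norm]
  rw [h2]
  calc (∫⁻ x, ‖A.indicator f x‖ₑ ∂μ).toReal ≤ (ENNReal.ofReal (ε / 2)).toReal :=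
        ENNReal.toReal_mono ENNReal.ofReal_ne_top h1
    _ = ε / 2 := ENNReal.toReal_ofReal (by linarith)
    _ < ε := by linarith


lemma my_vanish {N m : ℕ}
    (E : ℕ → Set (Fin N → ℝ)) (Elim : Set (Fin N → ℝ))
    (hE_meas : ∀ n, MeasurableSet (E n)) (hElim_meas : MeasurableSet Elim)
    (hElim_fin : volume Elim < ⊤)
    (hE_conv : Tendsto (fun n => volume ((E n) ∆ Elim)) atTop (𝓝 0))
    (u : ℕ → (Fin N → ℝ) → (Fin m → ℝ)) (ulim : (Fin N → ℝ) → (Fin m → ℝ))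
    (hu_int : ∀ n, Integrable (u n)) (hulim_int : Integrable ulim)
    (hu_zero : ∀ n, ∀ᵐ ξ, ξ ∉ E n → u n ξ = 0)
    (hu_ui : ∀ ε : ℝ, 0 < ε → ∃ δ : ℝ, 0 < δ ∧ ∀ A : Set (Fin N → ℝ),
      MeasurableSet A → volume A < ENNReal.ofReal δ →
      ∀ n, ∫ ξ in A, ‖u n ξ‖ < ε)
    (hu_weakBC : ∀ ψ : (Fin N → ℝ) → ℝ, Continuous ψ → (∃ M : ℝ, ∀ ξ, |ψ ξ| ≤ M) →
      Tendsto (fun n => ∫ ξ, ψ ξ • u n ξ) atTop (𝓝 (∫ ξ, ψ ξ • ulim ξ))) :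
    ∀ᵐ ξ, ξ ∉ Elim → ulim ξ = 0 := by
  classical
  set ρ : Measure (Fin N → ℝ) :=
    volume.withDensity (fun x => (‖ulim x‖₊ : ℝ≥0∞)) + volume.restrict Elim with hρ
  have hρ_apply : ∀ S : Set (Fin N → ℝ), MeasurableSet S →
      ρ S = (∫⁻ x in S, (‖ulim x‖₊ : ℝ≥0∞)) + volume (S ∩ Elim) := by
    intro S hS
    rw [hρ, Measure.add_apply, withDensity_apply _ hS, Measure.restrict_apply' hElim_meas]
  haveI : IsFiniteMeasure ρ := by
    constructor
    rw [hρ_apply _ MeasurableSet.univ, setLIntegral_univ]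
    exact ENNReal.add_lt_top.2 ⟨hulim_int.2, (measure_mono (Set.inter_subset_right)).trans_lt hElim_fin⟩
  have hρulim : ∀ S : Set (Fin N → ℝ), MeasurableSet S →
      ∫ x in S, ‖ulim x‖ ≤ (ρ S).toReal := by
    intro S hS
    have e0 : ENNReal.ofReal (∫ x in S, ‖ulim x‖) = ∫⁻ x in S, (‖ulim x‖₊ : ℝ≥0∞) :=
      ofReal_integral_norm_eq_lintegral_enorm hulim_int.integrableOn
    have e1 : ENNReal.ofReal (∫ x in S, ‖ulim x‖) ≤ ρ S := by
      rw [e0, hρ_apply _ hS]; exact le_self_add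
    calc ∫ x in S, ‖ulim x‖
        = (ENNReal.ofReal (∫ x in S, ‖ulim x‖)).toReal :=
          (ENNReal.toReal_ofReal (integral_nonneg fun _ => norm_nonneg _)).symm
      _ ≤ (ρ S).toReal := ENNReal.toReal_mono (measure_ne_top ρ S) e1
  -- the key step
  have key : ∀ B : Set (Fin N → ℝ), MeasurableSet B → B ⊆ Elimᶜ →
      ∫ x in B, ulim x = 0 := by
    intro B hB hBc
    have hnorm : ∀ ε : ℝ, 0 < ε → ‖∫ x in B, ulim x‖ ≤ ε := by
      intro ε hε
      obtain ⟨δ₀, hδ₀, hUI⟩ := hu_ui (ε / 4) (by positivity)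
      set η : ℝ≥0∞ := min (ENNReal.ofReal (ε / 4)) (ENNReal.ofReal δ₀ / 2) with hη
      have hηpos : (0 : ℝ≥0∞) < η :=
        lt_min (ENNReal.ofReal_pos.2 (by positivity))
          (ENNReal.div_pos (ENNReal.ofReal_pos.2 hδ₀).ne' (by norm_num))
      have hη0 : η ≠ 0 := hηpos.ne'
      obtain ⟨K, hKB, hKc, hKd⟩ := hB.exists_isCompact_diff_lt (measure_ne_top ρ B) hη0
      obtain ⟨U, hKU, hUo, hU⟩ := Set.exists_isOpen_lt_add (μ := ρ) K (measure_ne_top ρ K) hη0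
      have hUK : ρ (U \ K) < η :=
        measure_diff_lt_of_lt_add hKc.measurableSet.nullMeasurableSet hKU
          (measure_ne_top ρ K) hU
      obtain ⟨ψ, hψ1, hψ0, hψcs, hψ01⟩ :=
        exists_continuous_one_zero_of_isCompact hKc hUo.isClosed_compl
          (disjoint_compl_right_iff_subset.mpr hKU)
      have hψbd : ∀ x, |ψ x| ≤ 1 := fun x =>
        abs_le.2 ⟨by linarith [(hψ01 x).1], (hψ01 x).2⟩
      have hten := hu_weakBC ψ ψ.continuous ⟨1, hψbd⟩
      -- the open set barely meets Elim
      have hKElim : volume (K ∩ Elim) = 0 := by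
        have : K ∩ Elim = ∅ := by
          apply Set.eq_empty_of_subset_empty
          intro x hx
          exact (hBc (hKB hx.1)) hx.2
        simp [this]
      have hUElim : volume (U ∩ Elim) < ENNReal.ofReal δ₀ := by
        have h2 : volume (U ∩ Elim) ≤ volume ((U \ K) ∩ Elim) + volume (K ∩ Elim) := by
          refine (measure_mono ?_).trans (measure_union_le _ _)
          intro x hx
          by_cases hxK : x ∈ K
          · exact Or.inr ⟨hxK, hx.2⟩
          · exact Or.inl ⟨⟨hx.1, hxK⟩, hx.2⟩
        have h4 : volume ((U \ K) ∩ Elim) ≤ ρ (U \ K) := by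
          rw [hρ_apply _ (hUo.measurableSet.diff hKc.measurableSet)]
          exact le_add_self
        calc volume (U ∩ Elim) ≤ ρ (U \ K) + 0 := by
              rw [hKElim] at h2; exact h2.trans (add_le_add h4 le_rfl)
          _ = ρ (U \ K) := by rw [add_zero]
          _ < η := hUK
          _ ≤ ENNReal.ofReal δ₀ / 2 := min_le_right _ _
          _ < ENNReal.ofReal δ₀ :=
              ENNReal.half_lt_self (ENNReal.ofReal_pos.2 hδ₀).ne' ENNReal.ofReal_ne_top
      have hEv : ∀ᶠ n in atTop, volume (E n \ Elim) < ENNReal.ofReal δ₀ := by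
        filter_upwards [hE_conv.eventually_lt_const (ENNReal.ofReal_pos.2 hδ₀)] with n hn
        refine lt_of_le_of_lt (measure_mono ?_) hn
        rw [symmDiff_def]
        exact Set.subset_union_left
      have hbnd : ∀ᶠ n in atTop, ‖∫ x, ψ x • u n x‖ ≤ ε / 2 := by
        filter_upwards [hEv] with n hn
        have hSm : MeasurableSet (U ∩ E n) := hUo.measurableSet.inter (hE_meas n)
        have hInd : Integrable ((U ∩ E n).indicator fun x => ‖u n x‖) :=
          (hu_int n).norm.indicator hSm
        have hle : ‖∫ x, ψ x • u n x‖ ≤ ∫ x, (U ∩ E n).indicator (fun x => ‖u n x‖) x := by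
          refine norm_integral_le_of_norm_le hInd ?_
          filter_upwards [hu_zero n] with x hx
          by_cases hxE : x ∈ E n
          · by_cases hxU : x ∈ U
            · rw [Set.indicator_of_mem (Set.mem_inter hxU hxE), norm_smul]
              calc ‖ψ x‖ * ‖u n x‖ ≤ 1 * ‖u n x‖ := by
                    gcongr
                    exact (Real.norm_eq_abs _) ▸ hψbd x
                _ = ‖u n x‖ := one_mul _
            · have hz : ψ x = 0 := hψ0 (by simpa using hxU)
              rw [hz, zero_smul, norm_zero]
              exact Set.indicator_apply_nonneg fun _ => norm_nonneg _
          · rw [hx hxE, smul_zero, norm_zero]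
            exact Set.indicator_apply_nonneg fun _ => norm_nonneg _
        rw [integral_indicator hSm] at hle
        have hIntOn : ∀ T : Set (Fin N → ℝ), IntegrableOn (fun x => ‖u n x‖) T :=
          fun T => (hu_int n).norm.integrableOn
        have hsplit : (∫ x in U ∩ E n, ‖u n x‖)
            = (∫ x in (U ∩ E n) ∩ Elim, ‖u n x‖) + ∫ x in (U ∩ E n) \ Elim, ‖u n x‖ :=
          (integral_inter_add_diff hElim_meas (hIntOn _)).symm
        have h5 : (∫ x in (U ∩ E n) ∩ Elim, ‖u n x‖) ≤ ∫ x in U ∩ Elim, ‖u n x‖ :=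
          setIntegral_mono_set (hIntOn _) (Eventually.of_forall fun x => norm_nonneg _)
            (HasSubset.Subset.eventuallyLE (Set.inter_subset_inter_left Elim Set.inter_subset_left))
        have h6 : (∫ x in (U ∩ E n) \ Elim, ‖u n x‖) ≤ ∫ x in E n \ Elim, ‖u n x‖ :=
          setIntegral_mono_set (hIntOn _) (Eventually.of_forall fun x => norm_nonneg _)
            (HasSubset.Subset.eventuallyLE (Set.diff_subset_diff_left Set.inter_subset_right))
        have h7 : (∫ x in U ∩ Elim, ‖u n x‖) < ε / 4 :=
          hUI _ (hUo.measurableSet.inter hElim_meas) hUElim n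
        have h8 : (∫ x in E n \ Elim, ‖u n x‖) < ε / 4 :=
          hUI _ ((hE_meas n).diff hElim_meas) hn n
        linarith
      have hψulim : ‖∫ x, ψ x • ulim x‖ ≤ ε / 2 := le_of_tendsto hten.norm hbnd
      -- difference bound
      have hψint : Integrable (fun x => ψ x • ulim x) := by
        refine Integrable.mono' hulim_int.norm
          (ψ.continuous.aestronglyMeasurable.smul hulim_int.1) ?_
        refine Eventually.of_forall fun x => ?_
        rw [norm_smul]
        calc ‖ψ x‖ * ‖ulim x‖ ≤ 1 * ‖ulim x‖ := by
              gcongr; exact (Real.norm_eq_abs _) ▸ hψbd x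
          _ = ‖ulim x‖ := one_mul _
      have hBint : Integrable (B.indicator ulim) := hulim_int.indicator hB
      set S : Set (Fin N → ℝ) := (B \ K) ∪ (U \ K) with hS
      have hSm : MeasurableSet S :=
        (hB.diff hKc.measurableSet).union (hUo.measurableSet.diff hKc.measurableSet)
      have hdiff : ‖(∫ x in B, ulim x) - ∫ x, ψ x • ulim x‖ ≤ ε / 2 := by
        have heq : (∫ x in B, ulim x) - (∫ x, ψ x • ulim x)
            = ∫ x, (B.indicator ulim x - ψ x • ulim x) := by
          rw [integral_sub hBint hψint, integral_indicator hB]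
        rw [heq]
        have hptw : ∀ x, ‖B.indicator ulim x - ψ x • ulim x‖
            ≤ S.indicator (fun x => ‖ulim x‖) x := by
          intro x
          by_cases hxK : x ∈ K
          · rw [Set.indicator_of_mem (hKB hxK), hψ1 hxK]
            simp only [Pi.one_apply, one_smul, sub_self, norm_zero]
            exact Set.indicator_apply_nonneg fun _ => norm_nonneg _
          · by_cases hxB : x ∈ B
            · rw [Set.indicator_of_mem hxB,
                Set.indicator_of_mem (Set.mem_union_left _ (Set.mem_diff_of_mem hxB hxK))]
              have : ulim x - ψ x • ulim x = (1 - ψ x) • ulim x := by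
                rw [sub_smul, one_smul]
              rw [this, norm_smul, Real.norm_eq_abs]
              calc |1 - ψ x| * ‖ulim x‖ ≤ 1 * ‖ulim x‖ := by
                    gcongr
                    rw [abs_le]
                    constructor <;> [linarith [(hψ01 x).2]; linarith [(hψ01 x).1]]
                _ = ‖ulim x‖ := one_mul _
            · rw [Set.indicator_of_notMem hxB, zero_sub, norm_neg, norm_smul,
                Real.norm_eq_abs]
              by_cases hxU : x ∈ U
              · rw [Set.indicator_of_mem (Set.mem_union_right _ (Set.mem_diff_of_mem hxU hxK))]
                calc |ψ x| * ‖ulim x‖ ≤ 1 * ‖ulim x‖ := by gcongr; exact hψbd x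
                  _ = ‖ulim x‖ := one_mul _
              · have hz0 : ψ x = 0 := hψ0 (by simpa using hxU)
                rw [hz0, abs_zero, zero_mul]
                exact Set.indicator_apply_nonneg fun _ => norm_nonneg _
        refine (norm_integral_le_of_norm_le (hulim_int.norm.indicator hSm)
          (Eventually.of_forall hptw)).trans ?_
        rw [integral_indicator hSm]
        have h9 : ρ S ≤ ENNReal.ofReal (ε / 4) + ENNReal.ofReal (ε / 4) := by
          refine (measure_union_le _ _).trans ?_
          exact add_le_add (hKd.le.trans (min_le_left _ _)) (hUK.le.trans (min_le_left _ _))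
        calc ∫ x in S, ‖ulim x‖ ≤ (ρ S).toReal := hρulim S hSm
          _ ≤ (ENNReal.ofReal (ε / 4) + ENNReal.ofReal (ε / 4)).toReal :=
              ENNReal.toReal_mono (by finiteness) h9
          _ = ε / 2 := by
              rw [← ENNReal.ofReal_add (by positivity) (by positivity),
                ENNReal.toReal_ofReal (by positivity)]
              ring
      calc ‖∫ x in B, ulim x‖
          = ‖((∫ x in B, ulim x) - (∫ x, ψ x • ulim x)) + ∫ x, ψ x • ulim x‖ := by
            rw [sub_add_cancel]
        _ ≤ ‖(∫ x in B, ulim x) - ∫ x, ψ x • ulim x‖ + ‖∫ x, ψ x • ulim x‖ := norm_add_le _ _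
        _ ≤ ε / 2 + ε / 2 := add_le_add hdiff hψulim
        _ = ε := by ring
    have : ‖∫ x in B, ulim x‖ ≤ 0 := by
      refine le_of_forall_pos_le_add fun ε hε => ?_
      simpa using hnorm ε hε
    simpa [norm_le_zero_iff] using this
  -- pass to a measurable representative and conclude componentwise
  set v := hulim_int.1.mk ulim with hv
  have hveq : ulim =ᵐ[volume] v := hulim_int.1.ae_eq_mk
  have hvsm : StronglyMeasurable v := hulim_int.1.stronglyMeasurable_mk
  have hvm : Measurable v := hvsm.measurable
  have hvint : Integrable v := hulim_int.congr hveq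
  have keyv : ∀ B : Set (Fin N → ℝ), MeasurableSet B → B ⊆ Elimᶜ →
      ∀ i : Fin m, (∫ x in B, v x i) = 0 := by
    intro B hB hBc i
    have h1 : (∫ x in B, v x) = 0 := by
      rw [← key B hB hBc]
      exact integral_congr_ae (ae_restrict_of_ae hveq.symm)
    have h2 : (∫ x in B, (ContinuousLinearMap.proj (R := ℝ) (φ := fun _ : Fin m => ℝ) i) (v x))
        = (ContinuousLinearMap.proj (R := ℝ) (φ := fun _ : Fin m => ℝ) i) (∫ x in B, v x) :=
      ContinuousLinearMap.integral_comp_comm _ hvint.integrableOn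
    simpa [h1] using h2
  have hcomp : ∀ i : Fin m, volume (Elimᶜ ∩ {x | 0 < v x i}) = 0
      ∧ volume (Elimᶜ ∩ {x | v x i < 0}) = 0 := by
    intro i
    have hvi : Measurable fun x => v x i := (measurable_pi_apply i).comp hvm
    have hvii : Integrable fun x => v x i :=
      (ContinuousLinearMap.proj (R := ℝ) (φ := fun _ : Fin m => ℝ) i).integrable_comp hvint
    constructor
    · set B := Elimᶜ ∩ {x | 0 < v x i} with hBdef
      have hBm : MeasurableSet B := hElim_meas.compl.inter (measurableSet_lt measurable_const hvi)
      have h0 : (∫ x in B, v x i) = 0 := keyv B hBm Set.inter_subset_left i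
      have hnn : 0 ≤ᵐ[volume.restrict B] fun x => v x i :=
        (ae_restrict_iff' hBm).2 (Eventually.of_forall fun x hx => hx.2.le)
      have hz : (fun x => v x i) =ᵐ[volume.restrict B] 0 :=
        (integral_eq_zero_iff_of_nonneg_ae hnn hvii.integrableOn).1 h0
      have hz2 : volume.restrict B {x | v x i ≠ 0} = 0 := by
        have := hz
        rw [Filter.EventuallyEq, ae_iff] at this
        simpa using this
      have hms : MeasurableSet {x | v x i ≠ 0} := (hvi (measurableSet_singleton 0)).compl
      rw [Measure.restrict_apply hms] at hz2
      refine measure_mono_null (fun x hx => ?_) hz2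
      exact ⟨hx.2.ne', hx⟩
    · set B := Elimᶜ ∩ {x | v x i < 0} with hBdef
      have hBm : MeasurableSet B := hElim_meas.compl.inter (measurableSet_lt hvi measurable_const)
      have h0 : (∫ x in B, -(v x i)) = 0 := by
        rw [integral_neg, keyv B hBm Set.inter_subset_left i, neg_zero]
      have hnn : 0 ≤ᵐ[volume.restrict B] fun x => -(v x i) :=
        (ae_restrict_iff' hBm).2 (Eventually.of_forall fun x hx => by
          simp only [Pi.zero_apply, neg_nonneg]; exact hx.2.le)
      have hz : (fun x => -(v x i)) =ᵐ[volume.restrict B] 0 :=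
        (integral_eq_zero_iff_of_nonneg_ae hnn hvii.neg.integrableOn).1 h0
      have hz2 : volume.restrict B {x | v x i ≠ 0} = 0 := by
        have := hz
        rw [Filter.EventuallyEq, ae_iff] at this
        refine measure_mono_null (fun x hx => ?_) this
        simpa using hx
      have hms : MeasurableSet {x | v x i ≠ 0} := (hvi (measurableSet_singleton 0)).compl
      rw [Measure.restrict_apply hms] at hz2
      refine measure_mono_null (fun x hx => ?_) hz2
      exact ⟨hx.2.ne, hx⟩
  have hnull : volume (Elimᶜ ∩ {x | v x ≠ 0}) = 0 := by
    refine measure_mono_null (fun x hx => ?_)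
      (measure_iUnion_null (s := fun i : Fin m =>
        (Elimᶜ ∩ {x | 0 < v x i}) ∪ (Elimᶜ ∩ {x | v x i < 0}))
        (fun i => measure_union_null (hcomp i).1 (hcomp i).2))
    obtain ⟨hx1, hx2⟩ := hx
    have : ∃ i, v x i ≠ 0 := by
      by_contra h
      push_neg at h
      exact hx2 (funext h)
    obtain ⟨i, hi⟩ := this
    rcases hi.lt_or_gt with h | h
    · exact Set.mem_iUnion.2 ⟨i, Or.inr ⟨hx1, h⟩⟩
    · exact Set.mem_iUnion.2 ⟨i, Or.inl ⟨hx1, h⟩⟩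
  have hae : ∀ᵐ x, x ∉ Elimᶜ ∩ {x | v x ≠ 0} := measure_eq_zero_iff_ae_notMem.1 hnull
  filter_upwards [hveq, hae] with x hx1 hx2 hxE
  rw [hx1]
  by_contra h
  exact hx2 ⟨hxE, h⟩


set_option maxHeartbeats 1000000 in
lemma my_main_bounded {N m : ℕ}
    (E : ℕ → Set (Fin N → ℝ)) (Elim : Set (Fin N → ℝ))
    (hE_meas : ∀ n, MeasurableSet (E n)) (hElim_meas : MeasurableSet Elim)
    (hElim_fin : volume Elim < ⊤)
    (hE_conv : Tendsto (fun n => volume ((E n) ∆ Elim)) atTop (𝓝 0))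
    (u : ℕ → (Fin N → ℝ) → (Fin m → ℝ)) (ulim : (Fin N → ℝ) → (Fin m → ℝ))
    (hu_int : ∀ n, Integrable (u n)) (hulim_int : Integrable ulim)
    (hu_zero : ∀ n, ∀ᵐ ξ, ξ ∉ E n → u n ξ = 0)
    (hulim_zero : ∀ᵐ ξ, ξ ∉ Elim → ulim ξ = 0)
    (hu_bdd : ∃ C : ℝ, ∀ n, ∫ ξ, ‖u n ξ‖ ≤ C)
    (hu_ui : ∀ ε : ℝ, 0 < ε → ∃ δ : ℝ, 0 < δ ∧ ∀ A : Set (Fin N → ℝ),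
      MeasurableSet A → volume A < ENNReal.ofReal δ →
      ∀ n, ∫ ξ in A, ‖u n ξ‖ < ε)
    (hu_weakBC : ∀ ψ : (Fin N → ℝ) → ℝ, Continuous ψ → (∃ M : ℝ, ∀ ξ, |ψ ξ| ≤ M) →
      Tendsto (fun n => ∫ ξ, ψ ξ • u n ξ) atTop (𝓝 (∫ ξ, ψ ξ • ulim ξ)))
    (φ : (Fin N → ℝ) → ℝ) (hφm : Measurable φ) (M : ℝ) (hM : 0 ≤ M)
    (hφM : ∀ ξ, |φ ξ| ≤ M) :
    Tendsto (fun n => ∫ ξ, φ ξ • u n ξ) atTop (𝓝 (∫ ξ, φ ξ • ulim ξ)) := by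
  classical
  obtain ⟨C, hC⟩ := hu_bdd
  have hC0 : 0 ≤ C := le_trans (integral_nonneg fun _ => norm_nonneg _) (hC 0)
  set Clim : ℝ := ∫ ξ, ‖ulim ξ‖ with hClimdef
  have hClim0 : 0 ≤ Clim := integral_nonneg fun _ => norm_nonneg _
  rw [Metric.tendsto_atTop]
  intro ε hε
  set ε₁ : ℝ := ε / (8 * (C + Clim + 1)) with hε₁def
  have hε₁ : 0 < ε₁ := by positivity
  set ε₂ : ℝ := ε / (16 * (M + 1)) with hε₂def
  have hε₂ : 0 < ε₂ := by positivity
  obtain ⟨δ₁, hδ₁, hUI⟩ := hu_ui ε₂ hε₂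
  obtain ⟨δ₂, hδ₂, hAC⟩ := my_absCont hulim_int hε₂
  set δ : ℝ := min δ₁ δ₂ with hδdef
  have hδ : 0 < δ := lt_min hδ₁ hδ₂
  -- approximate `Elim.indicator φ` in L¹ by a clamped continuous function
  have hfInd : Integrable (Elim.indicator φ) := by
    have h1 : IntegrableOn φ Elim := by
      refine Integrable.mono' (g := fun _ => M) (integrableOn_const hElim_fin.ne enorm_ne_top)
        hφm.aestronglyMeasurable.restrict ?_
      exact Eventually.of_forall fun x => (Real.norm_eq_abs _) ▸ hφM x
    exact h1.integrable_indicator hElim_meas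
  obtain ⟨ψ₀, hψ₀cs, hψ₀near, hψ₀cont, hψ₀int⟩ :=
    hfInd.exists_hasCompactSupport_integral_sub_le (show (0:ℝ) < δ * ε₁ / 2 by positivity)
  set ψ : (Fin N → ℝ) → ℝ := fun x => max (-M) (min M (ψ₀ x)) with hψdef
  have hψcont : Continuous ψ := continuous_const.max (continuous_const.min hψ₀cont)
  have hψbd : ∀ x, |ψ x| ≤ M := by
    intro x
    rw [abs_le]
    refine ⟨le_max_left _ _, max_le (by linarith) (min_le_left _ _)⟩
  have hψcs : HasCompactSupport ψ := by
    refine hψ₀cs.mono fun x hx => ?_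
    simp only [Function.mem_support, ne_eq] at hx ⊢
    intro h0
    apply hx
    rw [hψdef]
    simp only [h0, min_eq_right hM]
    exact max_eq_right (neg_nonpos.2 hM)
  have hψint : Integrable ψ := hψcont.integrable_of_hasCompactSupport hψcs
  have hψsub : ∀ x, |Elim.indicator φ x - ψ x| ≤ |Elim.indicator φ x - ψ₀ x| := by
    intro x
    refine my_clamp_abs M _ _ hM ?_
    by_cases hx : x ∈ Elim
    · rw [Set.indicator_of_mem hx]; exact hφM x
    · rw [Set.indicator_of_notMem hx, abs_zero]; exact hM
  have hL1 : (∫ x, |Elim.indicator φ x - ψ x|) ≤ δ * ε₁ / 2 := by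
    refine le_trans (integral_mono (hfInd.sub hψint).abs (hfInd.sub hψ₀int).abs hψsub) ?_
    simpa [Real.norm_eq_abs] using hψ₀near
  -- the bad set where ψ is far from φ on Elim
  set g : (Fin N → ℝ) → ℝ := fun x => Elim.indicator φ x - ψ x with hgdef
  have hgint : Integrable g := hfInd.sub hψint
  have hgm : Measurable g := (hφm.indicator hElim_meas).sub hψcont.measurable
  set badG : Set (Fin N → ℝ) := {x | ε₁ ≤ |g x|} with hbadGdef
  have hbadGm : MeasurableSet badG := measurableSet_le measurable_const hgm.abs
  have hbadGvol : volume badG < ENNReal.ofReal δ := by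
    have h1 : volume badG ≤ (∫⁻ x, ENNReal.ofReal |g x|) / ENNReal.ofReal ε₁ := by
      refine le_trans (measure_mono ?_)
        (meas_ge_le_lintegral_div (hgm.abs.ennreal_ofReal.aemeasurable)
          (ENNReal.ofReal_pos.2 hε₁).ne' ENNReal.ofReal_ne_top)
      intro x hx
      exact ENNReal.ofReal_le_ofReal hx
    have h2 : (∫⁻ x, ENNReal.ofReal |g x|) = ENNReal.ofReal (∫ x, |g x|) :=
      (ofReal_integral_eq_lintegral_ofReal hgint.abs
        (Eventually.of_forall fun x => abs_nonneg _)).symm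
    calc volume badG ≤ ENNReal.ofReal (∫ x, |g x|) / ENNReal.ofReal ε₁ := by rw [← h2]; exact h1
      _ ≤ ENNReal.ofReal (δ * ε₁ / 2) / ENNReal.ofReal ε₁ := by
          gcongr
      _ = ENNReal.ofReal (δ * ε₁ / 2 / ε₁) := (ENNReal.ofReal_div_of_pos hε₁).symm
      _ = ENNReal.ofReal (δ / 2) := by
          congr 1
          field_simp
      _ < ENNReal.ofReal δ := (ENNReal.ofReal_lt_ofReal_iff hδ).2 (by linarith)
  have hδδ₁ : ENNReal.ofReal δ ≤ ENNReal.ofReal δ₁ := ENNReal.ofReal_le_ofReal (min_le_left _ _)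
  have hδδ₂ : ENNReal.ofReal δ ≤ ENNReal.ofReal δ₂ := ENNReal.ofReal_le_ofReal (min_le_right _ _)
  -- integrability of the pairings
  have hsmul_int : ∀ (θ : (Fin N → ℝ) → ℝ), Measurable θ → (∀ x, |θ x| ≤ M) →
      ∀ (w : (Fin N → ℝ) → (Fin m → ℝ)), Integrable w → Integrable (fun x => θ x • w x) := by
    intro θ hθm hθb w hw
    refine Integrable.mono' (hw.norm.const_mul M) (hθm.aestronglyMeasurable.smul hw.1) ?_
    refine Eventually.of_forall fun x => ?_
    rw [norm_smul, Real.norm_eq_abs]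
    exact mul_le_mul_of_nonneg_right (hθb x) (norm_nonneg _)
  have hIntφ : ∀ n, Integrable (fun x => φ x • u n x) :=
    fun n => hsmul_int φ hφm hφM _ (hu_int n)
  have hIntψ : ∀ n, Integrable (fun x => ψ x • u n x) :=
    fun n => hsmul_int ψ hψcont.measurable hψbd _ (hu_int n)
  have hIntφl : Integrable (fun x => φ x • ulim x) := hsmul_int φ hφm hφM _ hulim_int
  have hIntψl : Integrable (fun x => ψ x • ulim x) := hsmul_int ψ hψcont.measurable hψbd _ hulim_int
  -- eventual smallness of `E n \ Elim`
  have hEv : ∀ᶠ n in atTop, volume (E n \ Elim) < ENNReal.ofReal δ := by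
    filter_upwards [hE_conv.eventually_lt_const (ENNReal.ofReal_pos.2 hδ)] with n hn
    refine lt_of_le_of_lt (measure_mono ?_) hn
    rw [symmDiff_def]
    exact Set.subset_union_left
  -- main estimate for `u n`
  have hA : ∀ᶠ n in atTop, ‖(∫ x, φ x • u n x) - ∫ x, ψ x • u n x‖
      ≤ ε₁ * C + 2 * M * (ε₂ + ε₂) := by
    filter_upwards [hEv] with n hn
    set S : Set (Fin N → ℝ) := badG ∪ (E n \ Elim) with hSdef
    have hSm : MeasurableSet S := hbadGm.union ((hE_meas n).diff hElim_meas)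
    have heq : (∫ x, φ x • u n x) - (∫ x, ψ x • u n x) = ∫ x, (φ x - ψ x) • u n x := by
      rw [← integral_sub (hIntφ n) (hIntψ n)]
      congr 1
      ext x
      rw [sub_smul]
    have hbdint : Integrable (fun x =>
        ε₁ * ‖u n x‖ + (2 * M) * S.indicator (fun y => ‖u n y‖) x) :=
      ((hu_int n).norm.const_mul ε₁).add (((hu_int n).norm.indicator hSm).const_mul (2 * M))
    rw [heq]
    refine (norm_integral_le_of_norm_le hbdint ?_).trans ?_
    · filter_upwards [hu_zero n] with x hx
      rw [norm_smul, Real.norm_eq_abs]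
      by_cases hxE : x ∈ E n
      · have hind_nonneg : (0:ℝ) ≤ S.indicator (fun y => ‖u n y‖) x :=
          Set.indicator_apply_nonneg fun _ => norm_nonneg _
        have hfar : x ∈ S → |φ x - ψ x| * ‖u n x‖ ≤
            ε₁ * ‖u n x‖ + (2 * M) * S.indicator (fun y => ‖u n y‖) x := by
          intro hxS
          have h1 : |φ x - ψ x| ≤ 2 * M := by
            have h2 := hφM x
            have h3 := hψbd x
            calc |φ x - ψ x| ≤ |φ x| + |ψ x| := abs_sub _ _
              _ ≤ 2 * M := by linarith
          rw [Set.indicator_of_mem hxS]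
          have h4 := mul_le_mul_of_nonneg_right h1 (norm_nonneg (u n x))
          have h5 : 0 ≤ ε₁ * ‖u n x‖ := by positivity
          linarith
        by_cases hxElim : x ∈ Elim
        · by_cases hxbad : x ∈ badG
          · exact hfar (Set.mem_union_left _ hxbad)
          · have hgx : g x = φ x - ψ x := by
              rw [hgdef]
              simp [Set.indicator_of_mem hxElim]
            have h1 : |φ x - ψ x| < ε₁ := by
              have := hxbad
              rw [hbadGdef] at this
              simp only [Set.mem_setOf_eq, not_le, hgx] at this
              exact this
            have h4 := mul_le_mul_of_nonneg_right h1.le (norm_nonneg (u n x))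
            have h5 : 0 ≤ (2 * M) * S.indicator (fun y => ‖u n y‖) x := by
              have := hind_nonneg
              positivity
            linarith
        · exact hfar (Set.mem_union_right _ ⟨hxE, hxElim⟩)
      · rw [hx hxE, norm_zero, mul_zero]
        have hind_nonneg : (0:ℝ) ≤ S.indicator (fun y => ‖u n y‖) x :=
          Set.indicator_apply_nonneg fun _ => norm_nonneg _
        have h5 : 0 ≤ ε₁ * ‖u n x‖ := by positivity
        have h6 : 0 ≤ (2 * M) * S.indicator (fun y => ‖u n y‖) x := by positivity
        linarith
    · rw [integral_add ((hu_int n).norm.const_mul ε₁)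
        (((hu_int n).norm.indicator hSm).const_mul (2 * M)),
        integral_const_mul, integral_const_mul, integral_indicator hSm]
      have h7 : (∫ x in S, ‖u n x‖) ≤ ε₂ + ε₂ := by
        have hsplit : (∫ x in S, ‖u n x‖)
            = (∫ x in S ∩ badG, ‖u n x‖) + ∫ x in S \ badG, ‖u n x‖ :=
          (integral_inter_add_diff hbadGm (hu_int n).norm.integrableOn).symm
        have he1 : S ∩ badG = badG := Set.inter_eq_right.2 Set.subset_union_left
        have he2 : (∫ x in S \ badG, ‖u n x‖) ≤ ∫ x in E n \ Elim, ‖u n x‖ := by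
          refine setIntegral_mono_set (hu_int n).norm.integrableOn
            (Eventually.of_forall fun x => norm_nonneg _)
            (HasSubset.Subset.eventuallyLE ?_)
          intro x hx
          rcases hx.1 with h | h
          · exact absurd h hx.2
          · exact h
        have h8 : (∫ x in badG, ‖u n x‖) < ε₂ := hUI _ hbadGm (hbadGvol.trans_le hδδ₁) n
        have h9 : (∫ x in E n \ Elim, ‖u n x‖) < ε₂ :=
          hUI _ ((hE_meas n).diff hElim_meas) (hn.trans_le hδδ₁) n
        rw [hsplit, he1]
        linarith
      have h10 : (∫ x, ‖u n x‖) ≤ C := hC n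
      have h11 : ε₁ * (∫ x, ‖u n x‖) ≤ ε₁ * C := by
        exact mul_le_mul_of_nonneg_left h10 hε₁.le
      have h12 : (2 * M) * (∫ x in S, ‖u n x‖) ≤ 2 * M * (ε₂ + ε₂) :=
        mul_le_mul_of_nonneg_left h7 (by positivity)
      linarith
  -- estimate for ulim
  have hB : ‖(∫ x, φ x • ulim x) - ∫ x, ψ x • ulim x‖ ≤ ε₁ * Clim + 2 * M * ε₂ := by
    have heq : (∫ x, φ x • ulim x) - (∫ x, ψ x • ulim x) = ∫ x, (φ x - ψ x) • ulim x := by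
      rw [← integral_sub hIntφl hIntψl]
      congr 1
      ext x
      rw [sub_smul]
    have hbdint : Integrable (fun x =>
        ε₁ * ‖ulim x‖ + (2 * M) * badG.indicator (fun y => ‖ulim y‖) x) :=
      (hulim_int.norm.const_mul ε₁).add ((hulim_int.norm.indicator hbadGm).const_mul (2 * M))
    rw [heq]
    refine (norm_integral_le_of_norm_le hbdint ?_).trans ?_
    · filter_upwards [hulim_zero] with x hx
      rw [norm_smul, Real.norm_eq_abs]
      have hind_nonneg : (0:ℝ) ≤ badG.indicator (fun y => ‖ulim y‖) x :=
        Set.indicator_apply_nonneg fun _ => norm_nonneg _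
      by_cases hxElim : x ∈ Elim
      · by_cases hxbad : x ∈ badG
        · have h1 : |φ x - ψ x| ≤ 2 * M := by
            have h2 := hφM x
            have h3 := hψbd x
            calc |φ x - ψ x| ≤ |φ x| + |ψ x| := abs_sub _ _
              _ ≤ 2 * M := by linarith
          rw [Set.indicator_of_mem hxbad]
          have h4 := mul_le_mul_of_nonneg_right h1 (norm_nonneg (ulim x))
          have h5 : 0 ≤ ε₁ * ‖ulim x‖ := by positivity
          linarith
        · have hgx : g x = φ x - ψ x := by
            rw [hgdef]
            simp [Set.indicator_of_mem hxElim]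
          have h1 : |φ x - ψ x| < ε₁ := by
            have := hxbad
            rw [hbadGdef] at this
            simp only [Set.mem_setOf_eq, not_le, hgx] at this
            exact this
          have h4 := mul_le_mul_of_nonneg_right h1.le (norm_nonneg (ulim x))
          have h5 : 0 ≤ (2 * M) * badG.indicator (fun y => ‖ulim y‖) x := by positivity
          linarith
      · rw [hx hxElim, norm_zero, mul_zero]
        have h5 : 0 ≤ ε₁ * ‖ulim x‖ := by positivity
        have h6 : 0 ≤ (2 * M) * badG.indicator (fun y => ‖ulim y‖) x := by positivity
        linarith
    · rw [integral_add (hulim_int.norm.const_mul ε₁)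
        ((hulim_int.norm.indicator hbadGm).const_mul (2 * M)),
        integral_const_mul, integral_const_mul, integral_indicator hbadGm]
      have h8 : (∫ x in badG, ‖ulim x‖) < ε₂ := hAC _ hbadGm (hbadGvol.trans_le hδδ₂)
      have h11 : ε₁ * (∫ x, ‖ulim x‖) ≤ ε₁ * Clim := le_of_eq (by rw [hClimdef])
      have h12 : (2 * M) * (∫ x in badG, ‖ulim x‖) ≤ 2 * M * ε₂ :=
        mul_le_mul_of_nonneg_left h8.le (by positivity)
      linarith
  -- weak convergence against ψ
  obtain ⟨N₂, hN₂⟩ := Metric.tendsto_atTop.1 (hu_weakBC ψ hψcont ⟨M, hψbd⟩) (ε / 8)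
    (by positivity)
  obtain ⟨N₁, hN₁⟩ := eventually_atTop.1 hA
  refine ⟨max N₁ N₂, fun n hn => ?_⟩
  have h1 := hN₁ n (le_trans (le_max_left _ _) hn)
  have h2 := hN₂ n (le_trans (le_max_right _ _) hn)
  rw [dist_eq_norm] at h2 ⊢
  have htri : ‖(∫ x, φ x • u n x) - ∫ x, φ x • ulim x‖
      ≤ ‖(∫ x, φ x • u n x) - ∫ x, ψ x • u n x‖
        + ‖(∫ x, ψ x • u n x) - ∫ x, ψ x • ulim x‖
        + ‖(∫ x, φ x • ulim x) - ∫ x, ψ x • ulim x‖ := by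
    have := norm_add₃_le (a := (∫ x, φ x • u n x) - ∫ x, ψ x • u n x)
      (b := (∫ x, ψ x • u n x) - ∫ x, ψ x • ulim x)
      (c := (∫ x, ψ x • ulim x) - ∫ x, φ x • ulim x)
    rw [norm_sub_rev (a := ∫ x, ψ x • ulim x)] at this
    refine (le_of_eq ?_).trans this
    congr 1
    abel
  -- final arithmetic
  have hX : C + Clim + 1 ≠ 0 := by positivity
  have hY : (16 : ℝ) * (M + 1) ≠ 0 := by positivity
  have k1 : ε₁ * (C + Clim + 1) = ε / 8 := by
    rw [hε₁def]
    field_simp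
  have k2 : ε₂ * (16 * (M + 1)) = ε := by
    rw [hε₂def]
    field_simp
  have k3 : ε₁ * C + ε₁ * Clim ≤ ε / 8 := by nlinarith [hε₁.le]
  have k4 : 2 * M * (ε₂ + ε₂) + 2 * M * ε₂ ≤ 3 * ε / 8 := by nlinarith [hε₂.le, hM]
  calc ‖(∫ x, φ x • u n x) - ∫ x, φ x • ulim x‖
      ≤ ‖(∫ x, φ x • u n x) - ∫ x, ψ x • u n x‖
        + ‖(∫ x, ψ x • u n x) - ∫ x, ψ x • ulim x‖
        + ‖(∫ x, φ x • ulim x) - ∫ x, ψ x • ulim x‖ := htri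
    _ ≤ (ε₁ * C + 2 * M * (ε₂ + ε₂)) + ε / 8 + (ε₁ * Clim + 2 * M * ε₂) := by
        linarith [h1, h2, hB]
    _ < ε := by linarith


/-- Upgrading weak convergence tested against bounded continuous functions to full weak `L¹`
convergence (duality with `L∞`), for a uniformly integrable sequence vanishing outside sets
`Eₙ` converging in measure to a set `E` of finite measure. -/
theorem weak_L1_convergence_of_tendsto_boundedContinuous {N m : ℕ}
    (E : ℕ → Set (Fin N → ℝ)) (Elim : Set (Fin N → ℝ))
    (hE_meas : ∀ n, MeasurableSet (E n)) (hElim_meas : MeasurableSet Elim)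
    (hElim_fin : volume Elim < ⊤)
    (hE_conv : Tendsto (fun n => volume ((E n) ∆ Elim)) atTop (𝓝 0))
    (u : ℕ → (Fin N → ℝ) → (Fin m → ℝ)) (ulim : (Fin N → ℝ) → (Fin m → ℝ))
    (hu_int : ∀ n, Integrable (u n)) (hulim_int : Integrable ulim)
    (hu_zero : ∀ n, ∀ᵐ ξ, ξ ∉ E n → u n ξ = 0)
    (hu_bdd : ∃ C : ℝ, ∀ n, ∫ ξ, ‖u n ξ‖ ≤ C)
    (hu_ui : ∀ ε : ℝ, 0 < ε → ∃ δ : ℝ, 0 < δ ∧ ∀ A : Set (Fin N → ℝ),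
      MeasurableSet A → volume A < ENNReal.ofReal δ →
      ∀ n, ∫ ξ in A, ‖u n ξ‖ < ε)
    (hu_weakBC : ∀ ψ : (Fin N → ℝ) → ℝ, Continuous ψ → (∃ M : ℝ, ∀ ξ, |ψ ξ| ≤ M) →
      Tendsto (fun n => ∫ ξ, ψ ξ • u n ξ) atTop (𝓝 (∫ ξ, ψ ξ • ulim ξ))) :
    ∀ φ : (Fin N → ℝ) → ℝ, Measurable φ → (∃ M : ℝ, ∀ᵐ ξ, |φ ξ| ≤ M) →
      Tendsto (fun n => ∫ ξ, φ ξ • u n ξ) atTop (𝓝 (∫ ξ, φ ξ • ulim ξ)) := by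
  intro φ hφm hbd
  obtain ⟨M₀, hM₀⟩ := hbd
  set M : ℝ := max M₀ 0 with hMdef
  have hM : 0 ≤ M := le_max_right _ _
  have hM₀' : ∀ᵐ ξ, |φ ξ| ≤ M := hM₀.mono fun ξ h => h.trans (le_max_left _ _)
  set φ' : (Fin N → ℝ) → ℝ := fun ξ => if |φ ξ| ≤ M then φ ξ else 0 with hφ'def
  have hφ'm : Measurable φ' :=
    Measurable.ite (measurableSet_le hφm.abs measurable_const) hφm measurable_const
  have hφ'M : ∀ ξ, |φ' ξ| ≤ M := by
    intro ξ
    by_cases h : |φ ξ| ≤ M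
    · simpa [hφ'def, h] using h
    · simpa [hφ'def, h] using hM
  have hφeq : φ =ᵐ[volume] φ' := hM₀'.mono fun ξ h => by simp [hφ'def, h]
  have hulim_zero : ∀ᵐ ξ, ξ ∉ Elim → ulim ξ = 0 :=
    my_vanish E Elim hE_meas hElim_meas hElim_fin hE_conv u ulim hu_int hulim_int
      hu_zero hu_ui hu_weakBC
  have hmain := my_main_bounded E Elim hE_meas hElim_meas hElim_fin hE_conv u ulim
    hu_int hulim_int hu_zero hulim_zero hu_bdd hu_ui hu_weakBC φ' hφ'm M hM hφ'M
  have he1 : (fun n => ∫ ξ, φ ξ • u n ξ) = fun n => ∫ ξ, φ' ξ • u n ξ := by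
    funext n
    exact integral_congr_ae (hφeq.mono fun ξ h => by dsimp only; rw [h])
  have he2 : (∫ ξ, φ ξ • ulim ξ) = ∫ ξ, φ' ξ • ulim ξ :=
    integral_congr_ae (hφeq.mono fun ξ h => by dsimp only; rw [h])
  rw [he1, he2]
  exact hmain
end

section
/- Let N ≥ 1, let GL⁺ denote the open set of N×N real matrices with positive determinant, and let W : GL⁺ → [0, +∞) be continuously differentiable with the property that there is a constant c̃ > 0 such that |DW(G)[M·G]| ≤ c̃·(W(G) + 1)·‖M‖ for every G ∈ GL⁺ and every N×N matrix M, where DW(G) denotes the Fréchet derivative of W at G and ‖·‖ the operator norm. Then for every F ∈ GL⁺, every N×N matrix A, and every t ∈ ℝ with |t|·‖A‖ ≤ 1/2, the matrix (I + t·A)·F has positive determinant and W((I + t·A)·F) + 1 ≤ exp(2·c̃·‖A‖·|t|)·(W(F) + 1). -/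
open Filter Topology

attribute [local instance] Matrix.linftyOpNormedAddCommGroup Matrix.linftyOpNormedSpace

section Aux
open Matrix

variable {N : ℕ}

/-- If `|s| * ‖A‖ ≤ 1/2` then `1 + s • A` has nonzero determinant. -/
lemma aux_det_ne_zero {A : Matrix (Fin N) (Fin N) ℝ} {s : ℝ}
    (hs : |s| * ‖A‖ ≤ 1 / 2) : ((1 : Matrix (Fin N) (Fin N) ℝ) + s • A).det ≠ 0 := by
  intro hdet
  obtain ⟨v, hv, hveq⟩ := (Matrix.exists_mulVec_eq_zero_iff).2 hdet
  have hvnorm : 0 < ‖v‖ := norm_pos_iff.2 hv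
  have h1 : ((1 : Matrix (Fin N) (Fin N) ℝ) + s • A) *ᵥ v = v + s • (A *ᵥ v) := by
    rw [Matrix.add_mulVec, Matrix.one_mulVec, Matrix.smul_mulVec]
  have h2 : v = -(s • (A *ᵥ v)) := by
    have := hveq
    rw [h1] at this
    linear_combination (norm := module) this
  have h3 : ‖v‖ ≤ |s| * ‖A‖ * ‖v‖ := by
    calc ‖v‖ = ‖-(s • (A *ᵥ v))‖ := by rw [← h2]
    _ = |s| * ‖A *ᵥ v‖ := by rw [norm_neg, norm_smul, Real.norm_eq_abs]
    _ ≤ |s| * (‖A‖ * ‖v‖) := by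
        exact mul_le_mul_of_nonneg_left (Matrix.linfty_opNorm_mulVec A v) (abs_nonneg s)
    _ = |s| * ‖A‖ * ‖v‖ := by ring
  nlinarith

/-- If `|s| * ‖A‖ ≤ 1/2` then `det (1 + s • A) > 0`. -/
lemma aux_det_pos {A : Matrix (Fin N) (Fin N) ℝ} {t : ℝ}
    (ht : |t| * ‖A‖ ≤ 1 / 2) : 0 < ((1 : Matrix (Fin N) (Fin N) ℝ) + t • A).det := by
  set f : ℝ → ℝ := fun s => ((1 : Matrix (Fin N) (Fin N) ℝ) + s • A).det with hf
  have hcont : Continuous f := by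
    apply Continuous.matrix_det
    exact continuous_const.add (continuous_id.smul continuous_const)
  have hne : ∀ s ∈ Set.uIcc (0 : ℝ) t, f s ≠ 0 := by
    intro s hs
    apply aux_det_ne_zero
    have h1 : |s| ≤ |t| := by
      rcases Set.mem_uIcc.1 hs with ⟨h1, h2⟩ | ⟨h1, h2⟩ <;> rw [abs_le] <;>
        constructor <;> cases abs_le.1 (le_refl |t|) <;> nlinarith [abs_nonneg t, le_abs_self t, neg_abs_le t]
    calc |s| * ‖A‖ ≤ |t| * ‖A‖ := mul_le_mul_of_nonneg_right h1 (norm_nonneg A)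
    _ ≤ 1 / 2 := ht
  have hf0 : f 0 = 1 := by simp [hf]
  by_contra hle
  push_neg at hle
  -- 0 lies between f 0 = 1 and f t ≤ 0, so by IVT some s has f s = 0
  have h0mem : (0 : ℝ) ∈ Set.uIcc (f 0) (f t) := by
    rw [hf0]; exact Set.mem_uIcc.2 (Or.inr ⟨hle, zero_le_one⟩)
  have := intermediate_value_uIcc (hcont.continuousOn (s := Set.uIcc (0:ℝ) t)) h0mem
  obtain ⟨s, hs, hfs⟩ := this
  exact hne s hs hfs

end Aux

/-- Gronwall-type bound from the control condition (W3): if `W : GL⁺ → [0,∞)` is `C¹` with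
`|DW(G)[M G]| ≤ ctil (W(G)+1) ‖M‖`, then for `|t| ‖A‖ ≤ 1/2` the matrix `(I + t A) F` lies in
`GL⁺` and `W((I + t A) F) + 1 ≤ exp(2 ctil ‖A‖ |t|) (W(F) + 1)`. -/
theorem energy_control_along_outer_variation {N : ℕ} (hN : 1 ≤ N)
    (W : Matrix (Fin N) (Fin N) ℝ → ℝ) (ctil : ℝ) (hctil : 0 < ctil)
    (hW_nonneg : ∀ G : Matrix (Fin N) (Fin N) ℝ, 0 < G.det → 0 ≤ W G)
    (hW_diff : ContDiffOn ℝ 1 W {G : Matrix (Fin N) (Fin N) ℝ | 0 < G.det})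
    (hW_control : ∀ G : Matrix (Fin N) (Fin N) ℝ, 0 < G.det →
      ∀ M : Matrix (Fin N) (Fin N) ℝ, |fderiv ℝ W G (M * G)| ≤ ctil * (W G + 1) * ‖M‖) :
    ∀ F : Matrix (Fin N) (Fin N) ℝ, 0 < F.det →
      ∀ A : Matrix (Fin N) (Fin N) ℝ, ∀ t : ℝ, |t| * ‖A‖ ≤ 1 / 2 →
        0 < ((1 + t • A) * F).det ∧
        W ((1 + t • A) * F) + 1 ≤ Real.exp (2 * ctil * ‖A‖ * |t|) * (W F + 1) := by
  intro F hF A t ht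
  haveI : Nonempty (Fin N) := ⟨⟨0, hN⟩⟩
  -- the path
  set g : ℝ → Matrix (Fin N) (Fin N) ℝ := fun s => (1 + s • A) * F with hg
  have hsabs : ∀ s ∈ Set.uIcc (0 : ℝ) t, |s| * ‖A‖ ≤ 1 / 2 := by
    intro s hs
    have h1 : |s| ≤ |t| := by
      rcases Set.mem_uIcc.1 hs with ⟨h1, h2⟩ | ⟨h1, h2⟩ <;> rw [abs_le] <;>
        constructor <;> nlinarith [le_abs_self t, neg_abs_le t]
    calc |s| * ‖A‖ ≤ |t| * ‖A‖ := mul_le_mul_of_nonneg_right h1 (norm_nonneg A)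
    _ ≤ 1 / 2 := ht
  have hgdet : ∀ s ∈ Set.uIcc (0 : ℝ) t, 0 < (g s).det := by
    intro s hs
    rw [hg, Matrix.det_mul]
    exact mul_pos (aux_det_pos (hsabs s hs)) hF
  have htmem : t ∈ Set.uIcc (0 : ℝ) t := Set.right_mem_uIcc
  have h0mem : (0 : ℝ) ∈ Set.uIcc (0 : ℝ) t := Set.left_mem_uIcc
  refine ⟨hgdet t htmem, ?_⟩
  -- openness of GL⁺
  have hU : IsOpen {G : Matrix (Fin N) (Fin N) ℝ | 0 < G.det} :=
    isOpen_lt continuous_const (Continuous.matrix_det continuous_id)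
  -- derivative of g
  have hg_deriv : ∀ s : ℝ, HasDerivAt g (A * F) s := by
    intro s
    have h1 : HasDerivAt (fun s : ℝ => s • (A * F)) ((1:ℝ) • (A * F)) s :=
      (hasDerivAt_id s).smul_const (A * F)
    have h2 : HasDerivAt (fun s : ℝ => F + s • (A * F)) (A * F) s := by
      have h := h1.const_add F; rwa [one_smul] at h
    have : g = fun s : ℝ => F + s • (A * F) := by
      funext s
      rw [hg]
      simp [add_mul, Matrix.smul_mul]
    rw [this]
    exact h2
  -- W+1 positivity along g
  have hW1pos : ∀ s ∈ Set.uIcc (0:ℝ) t, 0 < W (g s) + 1 := fun s hs => by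
    have := hW_nonneg (g s) (hgdet s hs); linarith
  -- the log-energy function
  set ψ : ℝ → ℝ := fun s => Real.log (W (g s) + 1) with hψ
  have key : ∀ s ∈ Set.uIcc (0:ℝ) t,
      HasDerivWithinAt ψ (fderiv ℝ W (g s) (A * F) / (W (g s) + 1)) (Set.uIcc (0:ℝ) t) s := by
    intro s hs
    have hmem : g s ∈ {G : Matrix (Fin N) (Fin N) ℝ | 0 < G.det} := hgdet s hs
    have hdiff : DifferentiableAt ℝ W (g s) :=
      ((hW_diff.differentiableOn one_ne_zero) (g s) hmem).differentiableAt (hU.mem_nhds hmem)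
    have hWg : HasDerivAt (fun s => W (g s)) (fderiv ℝ W (g s) (A * F)) s :=
      hdiff.hasFDerivAt.comp_hasDerivAt s (hg_deriv s)
    have hWg1 : HasDerivAt (fun s => W (g s) + 1) (fderiv ℝ W (g s) (A * F)) s := by
      simpa using hWg.add_const 1
    have := hWg1.log (ne_of_gt (hW1pos s hs))
    exact this.hasDerivWithinAt
  -- bound on the derivative
  have hbound : ∀ s ∈ Set.uIcc (0:ℝ) t,
      ‖fderiv ℝ W (g s) (A * F) / (W (g s) + 1)‖ ≤ 2 * ctil * ‖A‖ := by
    intro s hs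
    set B : Matrix (Fin N) (Fin N) ℝ := (1 + s • A)⁻¹ with hB
    have hdetu : IsUnit ((1 + s • A) : Matrix (Fin N) (Fin N) ℝ).det :=
      isUnit_iff_ne_zero.2 (aux_det_ne_zero (hsabs s hs))
    have hBinv : B * (1 + s • A) = 1 := Matrix.nonsing_inv_mul _ hdetu
    -- ‖B‖ ≤ 2
    have hBnorm : ‖B‖ ≤ 2 := by
      have hBeq : B = 1 - B * (s • A) := by
        have : B * (1 + s • A) = B + B * (s • A) := by noncomm_ring
        rw [this] at hBinv
        linear_combination (norm := noncomm_ring) hBinv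
      have h1 : ‖B‖ ≤ ‖(1 : Matrix (Fin N) (Fin N) ℝ)‖ + ‖B * (s • A)‖ := by
        have h1' := norm_sub_le (1 : Matrix (Fin N) (Fin N) ℝ) (B * (s • A))
        rw [← hBeq] at h1'
        exact h1'
      have h2 : ‖B * (s • A)‖ ≤ ‖B‖ * (|s| * ‖A‖) := by
        calc ‖B * (s • A)‖ ≤ ‖B‖ * ‖s • A‖ := Matrix.linfty_opNorm_mul _ _
        _ = ‖B‖ * (|s| * ‖A‖) := by rw [norm_smul, Real.norm_eq_abs]
      have h3 : ‖B * (s • A)‖ ≤ ‖B‖ * (1/2) := by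
        refine h2.trans (mul_le_mul_of_nonneg_left (hsabs s hs) (norm_nonneg B))
      have hone : ‖(1 : Matrix (Fin N) (Fin N) ℝ)‖ = 1 := norm_one
      nlinarith [norm_nonneg B]
    -- rewrite A * F = (A * B) * g s
    have hAF : A * F = (A * B) * (g s) := by
      rw [hg]
      calc A * F = A * (1 : Matrix (Fin N) (Fin N) ℝ) * F := by rw [mul_one]
      _ = A * (B * (1 + s • A)) * F := by rw [hBinv]
      _ = (A * B) * ((1 + s • A) * F) := by noncomm_ring
    have hctrl := hW_control (g s) (hgdet s hs) (A * B)
    rw [← hAF] at hctrl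
    have hABnorm : ‖A * B‖ ≤ 2 * ‖A‖ := by
      calc ‖A * B‖ ≤ ‖A‖ * ‖B‖ := Matrix.linfty_opNorm_mul _ _
      _ ≤ ‖A‖ * 2 := mul_le_mul_of_nonneg_left hBnorm (norm_nonneg A)
      _ = 2 * ‖A‖ := by ring
    have hW1 := hW1pos s hs
    have habs : |fderiv ℝ W (g s) (A * F)| ≤ ctil * (W (g s) + 1) * (2 * ‖A‖) := by
      refine hctrl.trans ?_
      exact mul_le_mul_of_nonneg_left hABnorm (by positivity)
    rw [Real.norm_eq_abs, abs_div, abs_of_pos hW1, div_le_iff₀ hW1]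
    calc |fderiv ℝ W (g s) (A * F)| ≤ ctil * (W (g s) + 1) * (2 * ‖A‖) := habs
    _ = 2 * ctil * ‖A‖ * (W (g s) + 1) := by ring
  -- mean value inequality
  have hconv : Convex ℝ (Set.uIcc (0:ℝ) t) := convex_uIcc 0 t
  have hmvt := hconv.norm_image_sub_le_of_norm_hasDerivWithin_le key hbound h0mem htmem
  -- unpack
  have hg0 : g 0 = F := by rw [hg]; simp
  have hψt : |ψ t - ψ 0| ≤ 2 * ctil * ‖A‖ * |t| := by
    have : ‖ψ t - ψ 0‖ ≤ 2 * ctil * ‖A‖ * ‖t - 0‖ := hmvt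
    simpa [Real.norm_eq_abs] using this
  have hψle : ψ t ≤ ψ 0 + 2 * ctil * ‖A‖ * |t| := by
    have := abs_le.1 hψt
    linarith [this.2]
  have hWt1 : 0 < W (g t) + 1 := hW1pos t htmem
  have hWF1 : 0 < W F + 1 := by have := hW_nonneg F hF; linarith
  have hfinal : W (g t) + 1 ≤ Real.exp (2 * ctil * ‖A‖ * |t|) * (W F + 1) := by
    have h1 : W (g t) + 1 = Real.exp (ψ t) := by rw [hψ, Real.exp_log hWt1]
    have h2 : W F + 1 = Real.exp (ψ 0) := by
      have : ψ 0 = Real.log (W F + 1) := by simp only [hψ, hg0]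
      rw [this, Real.exp_log hWF1]
    rw [h1, h2, ← Real.exp_add]
    exact Real.exp_le_exp.2 (by linarith)
  exact hfinal
end

section
/- Let (Ω, μ) be a finite measure space, m ≥ 1, and g : ℝ^m → [0, +∞) a convex function. Let v_n, v : Ω → ℝ^m be integrable with ∫_Ω φ·v_n dμ → ∫_Ω φ·v dμ for every essentially bounded measurable φ : Ω → ℝ^m (with the Euclidean inner product φ·v_n). Then ∫_Ω g(v(x)) dμ(x) ≤ liminf_{n→∞} ∫_Ω g(v_n(x)) dμ(x), where the integrals take values in [0, +∞]. -/
open MeasureTheory Filter Topology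
open scoped ENNReal

/-- The affine function determined by a pair `(a, b)`: `z ↦ ∑ i, a i * z i + b`. -/
def affinePair {m : ℕ} (p : (Fin m → ℝ) × ℝ) (z : Fin m → ℝ) : ℝ :=
  (∑ i, p.1 i * z i) + p.2

lemma affinePair_continuous {m : ℕ} (p : (Fin m → ℝ) × ℝ) : Continuous (affinePair p) := by
  unfold affinePair; fun_prop

lemma clm_fst_eq_sum {m : ℕ} (f : ((Fin m → ℝ) × ℝ) →L[ℝ] ℝ) (y : Fin m → ℝ) :
    f (y, 0) = ∑ i, y i * f ((Pi.single i 1 : Fin m → ℝ), 0) := by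
  have hy : ((y, (0:ℝ)) : (Fin m → ℝ) × ℝ)
      = ∑ i, y i • (((Pi.single i 1 : Fin m → ℝ)), (0:ℝ)) := by
    rw [Prod.ext_iff]
    refine ⟨?_, by rw [Prod.snd_sum]; simp⟩
    rw [Prod.fst_sum]
    funext j
    rw [Finset.sum_apply]
    simp only [Prod.smul_mk, Pi.smul_apply, Pi.single_apply, smul_eq_mul]
    rw [Finset.sum_congr rfl (fun i _ => by
      rw [show y i * (if j = i then (1:ℝ) else 0) = if j = i then y i else 0 by
        by_cases h : j = i <;> simp [h]])]
    simp
  rw [hy, map_sum]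
  exact Finset.sum_congr rfl fun i _ => by rw [f.map_smul, smul_eq_mul]

lemma sum_div_helper {m : ℕ} (c : Fin m → ℝ) (y : Fin m → ℝ) (β : ℝ) :
    (∑ i, -c i / β * y i) = (-∑ i, y i * c i) / β := by
  rw [← Finset.sum_neg_distrib, Finset.sum_div]
  exact Finset.sum_congr rfl fun i _ => by ring

/-- Every finite convex function on `ℝ^m` has, at every point, affine minorants coming
`ε`-close: a consequence of the geometric Hahn–Banach theorem applied to the epigraph. -/
lemma exists_affine_minorant {m : ℕ} (g : (Fin m → ℝ) → ℝ)
    (hg_convex : ConvexOn ℝ Set.univ g) (z : Fin m → ℝ) {ε : ℝ} (hε : 0 < ε) :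
    ∃ p : (Fin m → ℝ) × ℝ, (∀ y, affinePair p y ≤ g y) ∧ g z - ε < affinePair p z := by
  have hgcont : Continuous g := hg_convex.locallyLipschitz.continuous
  set t : Set ((Fin m → ℝ) × ℝ) := {q | g q.1 ≤ q.2} with ht
  have ht₁ : Convex ℝ t := by
    rintro ⟨y₁, t₁⟩ h₁ ⟨y₂, t₂⟩ h₂ a b ha hb hab
    simp only [ht, Set.mem_setOf_eq] at h₁ h₂ ⊢
    have := hg_convex.2 (Set.mem_univ y₁) (Set.mem_univ y₂) ha hb hab
    simp only [smul_eq_mul] at this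
    calc g (a • y₁ + b • y₂) ≤ a * g y₁ + b * g y₂ := this
      _ ≤ a * t₁ + b * t₂ := by
          have := mul_le_mul_of_nonneg_left h₁ ha
          have := mul_le_mul_of_nonneg_left h₂ hb
          linarith
  have ht₂ : IsClosed t := isClosed_le (hgcont.comp continuous_fst) continuous_snd
  have disj : ((z, g z - ε) : (Fin m → ℝ) × ℝ) ∉ t := by
    simp only [ht, Set.mem_setOf_eq]; push_neg; linarith
  obtain ⟨f, u, hfx, hft⟩ := geometric_hahn_banach_point_closed ht₁ ht₂ disj
  set β : ℝ := f ((0 : Fin m → ℝ), (1 : ℝ)) with hβ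
  have hdecomp : ∀ (y : Fin m → ℝ) (s : ℝ), f (y, s) = f (y, 0) + s * β := by
    intro y s
    have h1 : ((y, s) : (Fin m → ℝ) × ℝ) = (y, (0:ℝ)) + s • ((0 : Fin m → ℝ), (1:ℝ)) := by
      simp [Prod.ext_iff]
    rw [h1, map_add, f.map_smul, smul_eq_mul]
  have hmem : ∀ y : Fin m → ℝ, ((y, g y) : (Fin m → ℝ) × ℝ) ∈ t := fun y => le_refl (g y)
  have hβ0 : 0 ≤ β := by
    by_contra hneg
    push_neg at hneg
    set s : ℝ := max 0 ((u - f (z, 0) - g z * β) / β) with hs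
    have hs0 : 0 ≤ s := le_max_left _ _
    have hmem' : ((z, g z + s) : (Fin m → ℝ) × ℝ) ∈ t := by
      simp only [ht, Set.mem_setOf_eq]; linarith
    have h2 := hft _ hmem'
    rw [hdecomp] at h2
    have h3 : (u - f (z, 0) - g z * β) / β ≤ s := le_max_right _ _
    rw [div_le_iff_of_neg hneg] at h3
    nlinarith
  have hβpos : 0 < β := by
    rcases lt_or_eq_of_le hβ0 with h | h
    · exact h
    · exfalso
      have h2 := hft _ (hmem z)
      rw [hdecomp] at h2
      rw [hdecomp] at hfx
      rw [← h] at h2 hfx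
      simp only [mul_zero, add_zero] at h2 hfx
      linarith
  refine ⟨(fun i => -f ((Pi.single i 1 : Fin m → ℝ), 0) / β, u / β), ?_, ?_⟩
  · intro y
    have h2 := hft _ (hmem y)
    rw [hdecomp] at h2
    unfold affinePair
    simp only
    rw [sum_div_helper, ← clm_fst_eq_sum, ← add_div, div_le_iff₀ hβpos]
    nlinarith
  · rw [hdecomp] at hfx
    unfold affinePair
    simp only
    rw [sum_div_helper, ← clm_fst_eq_sum, ← add_div, lt_div_iff₀ hβpos]
    nlinarith

/-- A countable family of affine minorants of a nonnegative convex function `g` on `ℝ^m`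
whose pointwise supremum is `g`, obtained from a countable dense subset of the set of all
affine minorants. -/
lemma exists_affine_seq {m : ℕ} (g : (Fin m → ℝ) → ℝ) (hg_nonneg : ∀ z, 0 ≤ g z)
    (hg_convex : ConvexOn ℝ Set.univ g) :
    ∃ e : ℕ → (Fin m → ℝ) × ℝ, e 0 = (0, 0) ∧ (∀ k y, affinePair (e k) y ≤ g y) ∧
      (∀ z (ε : ℝ), 0 < ε → ∃ k, g z - ε < affinePair (e k) z) := by
  set A : Set ((Fin m → ℝ) × ℝ) := {p | ∀ y, affinePair p y ≤ g y} with hA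
  have h0A : ((0, 0) : (Fin m → ℝ) × ℝ) ∈ A := by
    intro y; unfold affinePair; simpa using hg_nonneg y
  haveI : Nonempty ↥A := ⟨⟨_, h0A⟩⟩
  obtain ⟨s, hsc, hsd⟩ := TopologicalSpace.exists_countable_dense ↥A
  have hsne : s.Nonempty := hsd.nonempty
  obtain ⟨f0, hf0⟩ := hsc.exists_eq_range hsne
  refine ⟨fun k => Nat.rec ((0,0)) (fun k _ => (f0 k : (Fin m → ℝ) × ℝ)) k, rfl, ?_, ?_⟩
  · intro k y
    cases k with
    | zero => unfold affinePair; simpa using hg_nonneg y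
    | succ k => exact (f0 k).2 y
  · intro z ε hε
    obtain ⟨p, hpA, hpz⟩ := exists_affine_minorant g hg_convex z hε
    have hU : IsOpen {q : ↥A | g z - ε < affinePair (q : (Fin m → ℝ) × ℝ) z} := by
      have hcont : Continuous fun q : ↥A => affinePair (q : (Fin m → ℝ) × ℝ) z := by
        unfold affinePair
        fun_prop
      exact isOpen_lt continuous_const hcont
    have hne : {q : ↥A | g z - ε < affinePair (q : (Fin m → ℝ) × ℝ) z}.Nonempty :=
      ⟨⟨p, hpA⟩, hpz⟩
    obtain ⟨q, hqs, hq⟩ := hsd.exists_mem_open hU hne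
    rw [hf0] at hqs
    obtain ⟨k, hk⟩ := hqs
    exact ⟨k + 1, by rw [← hk] at hq; exact hq⟩

/-- Running maximum of the affine functions `affinePair (e 0), …, affinePair (e K)`. -/
def maxAff {m : ℕ} (e : ℕ → (Fin m → ℝ) × ℝ) : ℕ → (Fin m → ℝ) → ℝ
  | 0 => affinePair (e 0)
  | (K+1) => fun z => max (maxAff e K z) (affinePair (e (K+1)) z)

lemma maxAff_continuous {m : ℕ} (e : ℕ → (Fin m → ℝ) × ℝ) (K : ℕ) :
    Continuous (maxAff e K) := by
  induction K with
  | zero => exact affinePair_continuous _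
  | succ K ih => exact ih.max (affinePair_continuous _)

lemma maxAff_le {m : ℕ} {e : ℕ → (Fin m → ℝ) × ℝ} {g : (Fin m → ℝ) → ℝ}
    (h : ∀ k y, affinePair (e k) y ≤ g y) (K : ℕ) (z : Fin m → ℝ) :
    maxAff e K z ≤ g z := by
  induction K with
  | zero => exact h 0 z
  | succ K ih => exact max_le ih (h (K+1) z)

lemma le_maxAff {m : ℕ} (e : ℕ → (Fin m → ℝ) × ℝ) {k K : ℕ} (hk : k ≤ K) (z : Fin m → ℝ) :
    affinePair (e k) z ≤ maxAff e K z := by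
  induction K with
  | zero => rw [Nat.le_zero] at hk; subst hk; exact le_refl _
  | succ K ih =>
    rcases Nat.lt_or_ge k (K+1) with h | h
    · exact le_trans (ih (Nat.lt_succ_iff.mp h)) (le_max_left _ _)
    · have : k = K + 1 := le_antisymm hk h
      subst this; exact le_max_right _ _

lemma maxAff_mono {m : ℕ} (e : ℕ → (Fin m → ℝ) × ℝ) (z : Fin m → ℝ) :
    Monotone fun K => maxAff e K z :=
  monotone_nat_of_le_succ fun _ => le_max_left _ _

lemma maxAff_exists {m : ℕ} (e : ℕ → (Fin m → ℝ) × ℝ) (K : ℕ) (z : Fin m → ℝ) :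
    ∃ k ≤ K, affinePair (e k) z = maxAff e K z := by
  induction K with
  | zero => exact ⟨0, le_refl _, rfl⟩
  | succ K ih =>
    rcases max_cases (maxAff e K z) (affinePair (e (K+1)) z) with ⟨heq, _⟩ | ⟨heq, _⟩
    · obtain ⟨k, hk, hke⟩ := ih
      exact ⟨k, Nat.le_succ_of_le hk, by rw [hke, maxAff]; exact heq.symm⟩
    · exact ⟨K+1, le_refl _, by rw [maxAff]; exact heq.symm⟩

/-- Sequential weak `L¹` lower semicontinuity of convex integral functionals: if `vₙ → v`
weakly in `L¹(μ; ℝ^m)` and `g : ℝ^m → [0,∞)` is convex, then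
`∫ g(v) dμ ≤ liminf ∫ g(vₙ) dμ`. -/
theorem lsc_convex_integral_weak_L1 {Ω : Type*} [MeasurableSpace Ω] (μ : Measure Ω)
    [IsFiniteMeasure μ] {m : ℕ}
    (g : (Fin m → ℝ) → ℝ) (hg_nonneg : ∀ z, 0 ≤ g z) (hg_convex : ConvexOn ℝ Set.univ g)
    (v : ℕ → Ω → (Fin m → ℝ)) (vlim : Ω → (Fin m → ℝ))
    (hv_int : ∀ n, Integrable (v n) μ) (hvlim_int : Integrable vlim μ)
    (hweak : ∀ φ : Ω → (Fin m → ℝ), Measurable φ → (∃ M : ℝ, ∀ᵐ x ∂μ, ‖φ x‖ ≤ M) →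
      Tendsto (fun n => ∫ x, ∑ i, φ x i * v n x i ∂μ) atTop
        (𝓝 (∫ x, ∑ i, φ x i * vlim x i ∂μ))) :
    ∫⁻ x, ENNReal.ofReal (g (vlim x)) ∂μ ≤
      atTop.liminf (fun n => ∫⁻ x, ENNReal.ofReal (g (v n x)) ∂μ) := by
  classical
  obtain ⟨e, he0, heA, hedense⟩ := exists_affine_seq g hg_nonneg hg_convex
  set L := atTop.liminf (fun n => ∫⁻ x, ENNReal.ofReal (g (v n x)) ∂μ) with hL
  have haff0 : ∀ z : Fin m → ℝ, affinePair (e 0) z = 0 := by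
    intro z; rw [he0]; unfold affinePair; simp
  have hmax_nonneg : ∀ K (z : Fin m → ℝ), 0 ≤ maxAff e K z := fun K z =>
    (haff0 z) ▸ le_maxAff e (Nat.zero_le K) z
  have hmaxle : ∀ K (z : Fin m → ℝ), maxAff e K z ≤ g z := fun K z => maxAff_le heA K z
  have hvm : AEMeasurable vlim μ := hvlim_int.aemeasurable
  -- Step B: key claim for each fixed K
  have key : ∀ K : ℕ, ∫⁻ x, ENNReal.ofReal (maxAff e K (vlim x)) ∂μ ≤ L := by
    intro K
    set w := hvlim_int.1.mk vlim with hw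
    have hwm : Measurable w := hvlim_int.1.stronglyMeasurable_mk.measurable
    have hwae : vlim =ᵐ[μ] w := hvlim_int.1.ae_eq_mk
    have hex : ∀ z : Fin m → ℝ, ∃ k, affinePair (e k) z = maxAff e K z := fun z =>
      (maxAff_exists e K z).imp fun k hk => hk.2
    set τ : Ω → ℕ := fun x => Nat.find (hex (w x)) with hτdef
    have hτ_spec : ∀ x, affinePair (e (τ x)) (w x) = maxAff e K (w x) := fun x =>
      Nat.find_spec (hex (w x))
    have hτ_le : ∀ x, τ x ≤ K := by
      intro x
      obtain ⟨k, hkK, hk⟩ := maxAff_exists e K (w x)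
      exact le_trans (Nat.find_min' _ hk) hkK
    have hSm : ∀ n : ℕ, MeasurableSet ({z : Fin m → ℝ | affinePair (e n) z = maxAff e K z}) :=
      fun n => MeasureTheory.StronglyMeasurable.measurableSet_eq_fun
        (affinePair_continuous (e n)).stronglyMeasurable (maxAff_continuous e K).stronglyMeasurable
    have hτm : Measurable τ := by
      apply measurable_to_nat
      intro x
      have hset : τ ⁻¹' {τ x} = w ⁻¹' ({z | affinePair (e (τ x)) z = maxAff e K z} ∩
          ⋂ (j : ℕ) (_ : j < τ x), {z | affinePair (e j) z = maxAff e K z}ᶜ) := by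
        ext x'
        simp only [Set.mem_preimage, Set.mem_singleton_iff, Set.mem_inter_iff, Set.mem_iInter,
          Set.mem_compl_iff, Set.mem_setOf_eq, hτdef]
        rw [Nat.find_eq_iff]
      rw [hset]
      apply hwm
      exact (hSm (τ x)).inter (MeasurableSet.iInter fun j =>
        MeasurableSet.iInter fun _ => (hSm j).compl)
    set φ : Ω → (Fin m → ℝ) := fun x => (e (τ x)).1 with hφdef
    set c : Ω → ℝ := fun x => (e (τ x)).2 with hcdef
    have hφm : Measurable φ := (measurable_from_top (f := fun n : ℕ => (e n).1)).comp hτm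
    have hcm : Measurable c := (measurable_from_top (f := fun n : ℕ => (e n).2)).comp hτm
    set M := ∑ k ∈ Finset.range (K+1), ‖(e k).1‖ with hM
    have hφb : ∀ x, ‖φ x‖ ≤ M := fun x =>
      Finset.single_le_sum (f := fun k => ‖(e k).1‖) (fun k _ => norm_nonneg _)
        (Finset.mem_range.mpr (Nat.lt_succ_of_le (hτ_le x)))
    set Mc := ∑ k ∈ Finset.range (K+1), ‖(e k).2‖ with hMc
    have hcb : ∀ x, ‖c x‖ ≤ Mc := fun x =>
      Finset.single_le_sum (f := fun k => ‖(e k).2‖) (fun k _ => norm_nonneg _)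
        (Finset.mem_range.mpr (Nat.lt_succ_of_le (hτ_le x)))
    have hc_int : Integrable c μ :=
      Integrable.mono' (integrable_const Mc) hcm.aestronglyMeasurable
        (Filter.Eventually.of_forall hcb)
    have hsum_int : ∀ u : Ω → (Fin m → ℝ), Integrable u μ →
        Integrable (fun x => ∑ i, φ x i * u x i) μ := by
      intro u hu
      apply integrable_finset_sum
      intro i _
      apply Integrable.bdd_mul
      · exact (ContinuousLinearMap.proj (R := ℝ) (φ := fun _ : Fin m => ℝ) i).integrable_comp hu
      · exact (hφm.eval (a := i)).aestronglyMeasurable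
      · exact Filter.Eventually.of_forall fun x => le_trans (norm_le_pi_norm (φ x) i) (hφb x)
    set ψ : ℕ → Ω → ℝ := fun n x => (∑ i, φ x i * v n x i) + c x with hψdef
    have hψ_int : ∀ n, Integrable (ψ n) μ := fun n => (hsum_int _ (hv_int n)).add hc_int
    have hψlim_int : Integrable (fun x => (∑ i, φ x i * vlim x i) + c x) μ :=
      (hsum_int _ hvlim_int).add hc_int
    have hψ_le : ∀ n x, ψ n x ≤ g (v n x) := fun n x => heA (τ x) (v n x)
    have hofReal : ∀ n, ENNReal.ofReal (∫ x, ψ n x ∂μ) ≤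
        ∫⁻ x, ENNReal.ofReal (g (v n x)) ∂μ := by
      intro n
      have h1 : ∫ x, ψ n x ∂μ ≤ ∫ x, max (ψ n x) 0 ∂μ :=
        integral_mono (hψ_int n) (hψ_int n).pos_part fun x => le_max_left _ _
      have h2 : ENNReal.ofReal (∫ x, max (ψ n x) 0 ∂μ)
          = ∫⁻ x, ENNReal.ofReal (max (ψ n x) 0) ∂μ :=
        ofReal_integral_eq_lintegral_ofReal (hψ_int n).pos_part
          (Filter.Eventually.of_forall fun x => le_max_right _ _)
      calc ENNReal.ofReal (∫ x, ψ n x ∂μ)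
          ≤ ENNReal.ofReal (∫ x, max (ψ n x) 0 ∂μ) := ENNReal.ofReal_le_ofReal h1
        _ = ∫⁻ x, ENNReal.ofReal (max (ψ n x) 0) ∂μ := h2
        _ = ∫⁻ x, ENNReal.ofReal (ψ n x) ∂μ := by
            refine lintegral_congr fun x => ?_
            rcases le_total (ψ n x) 0 with h | h
            · rw [max_eq_right h, ENNReal.ofReal_of_nonpos h, ENNReal.ofReal_zero]
            · rw [max_eq_left h]
        _ ≤ ∫⁻ x, ENNReal.ofReal (g (v n x)) ∂μ :=
            lintegral_mono fun x => ENNReal.ofReal_le_ofReal (hψ_le n x)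
    have hT := hweak φ hφm ⟨M, Filter.Eventually.of_forall hφb⟩
    have hTψ : Tendsto (fun n => ∫ x, ψ n x ∂μ) atTop
        (𝓝 (∫ x, ((∑ i, φ x i * vlim x i) + c x) ∂μ)) := by
      have heqn : (fun n => ∫ x, ψ n x ∂μ)
          = fun n => (∫ x, ∑ i, φ x i * v n x i ∂μ) + ∫ x, c x ∂μ :=
        funext fun n => integral_add (hsum_int _ (hv_int n)) hc_int
      rw [heqn, integral_add (hsum_int _ hvlim_int) hc_int]
      exact hT.add tendsto_const_nhds
    have hlim_ae : (fun x => (∑ i, φ x i * vlim x i) + c x)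
        =ᵐ[μ] fun x => maxAff e K (vlim x) := by
      filter_upwards [hwae] with x hx
      calc (∑ i, φ x i * vlim x i) + c x = affinePair (e (τ x)) (vlim x) := rfl
        _ = affinePair (e (τ x)) (w x) := by rw [hx]
        _ = maxAff e K (w x) := hτ_spec x
        _ = maxAff e K (vlim x) := by rw [hx]
    have hlim_eq : ∫ x, ((∑ i, φ x i * vlim x i) + c x) ∂μ
        = ∫ x, maxAff e K (vlim x) ∂μ := integral_congr_ae hlim_ae
    have hmax_int : Integrable (fun x => maxAff e K (vlim x)) μ :=
      hψlim_int.congr hlim_ae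
    have h4 : ∫⁻ x, ENNReal.ofReal (maxAff e K (vlim x)) ∂μ
        = ENNReal.ofReal (∫ x, maxAff e K (vlim x) ∂μ) :=
      (ofReal_integral_eq_lintegral_ofReal hmax_int
        (Filter.Eventually.of_forall fun x => hmax_nonneg K _)).symm
    rw [h4]
    have h5 : Tendsto (fun n => ENNReal.ofReal (∫ x, ψ n x ∂μ)) atTop
        (𝓝 (ENNReal.ofReal (∫ x, maxAff e K (vlim x) ∂μ))) := by
      rw [← hlim_eq]
      exact ENNReal.tendsto_ofReal hTψ
    rw [← h5.liminf_eq]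
    exact liminf_le_liminf (Filter.Eventually.of_forall hofReal)
  -- Step A: monotone convergence
  have hmono : ∀ x, Monotone fun K => ENNReal.ofReal (maxAff e K (vlim x)) := fun x _ _ hab =>
    ENNReal.ofReal_le_ofReal (maxAff_mono e _ hab)
  have hsup : ∀ x, (⨆ K, ENNReal.ofReal (maxAff e K (vlim x)))
      = ENNReal.ofReal (g (vlim x)) := by
    intro x
    have hm := maxAff_mono e (vlim x)
    have hb : BddAbove (Set.range fun K => maxAff e K (vlim x)) := by
      refine ⟨g (vlim x), ?_⟩
      rintro y ⟨K, rfl⟩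
      exact hmaxle K _
    have heq : (⨆ K, maxAff e K (vlim x)) = g (vlim x) := by
      refine le_antisymm (ciSup_le fun K => hmaxle K _) ?_
      by_contra hlt
      push_neg at hlt
      obtain ⟨k, hk⟩ := hedense (vlim x) (g (vlim x) - ⨆ K, maxAff e K (vlim x)) (by linarith)
      have h1 : affinePair (e k) (vlim x) ≤ ⨆ K, maxAff e K (vlim x) :=
        le_trans (le_maxAff e (le_refl k) (vlim x)) (le_ciSup hb k)
      linarith
    have ht : Tendsto (fun K => maxAff e K (vlim x)) atTop (𝓝 (g (vlim x))) := by
      rw [← heq]; exact tendsto_atTop_ciSup hm hb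
    exact tendsto_nhds_unique (tendsto_atTop_iSup (hmono x)) (ENNReal.tendsto_ofReal ht)
  have hlhs : ∫⁻ x, ENNReal.ofReal (g (vlim x)) ∂μ
      = ⨆ K, ∫⁻ x, ENNReal.ofReal (maxAff e K (vlim x)) ∂μ := by
    have hmeas : ∀ K : ℕ, AEMeasurable (fun x => ENNReal.ofReal (maxAff e K (vlim x))) μ :=
      fun K => (ENNReal.measurable_ofReal.comp
        (maxAff_continuous e K).measurable).comp_aemeasurable hvm
    rw [← lintegral_iSup' (f := fun K x => ENNReal.ofReal (maxAff e K (vlim x))) hmeas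
      (Filter.Eventually.of_forall hmono)]
    exact lintegral_congr fun x => (hsup x).symm
  rw [hlhs]
  exact iSup_le key
end

section
/- Let Ω ⊆ ℝ^N be a bounded open set. For each n ∈ ℕ let y_n : Ω → ℝ^N be injective and differentiable at every point of Ω with det Dy_n(x) > 0 for all x ∈ Ω. Let γ : ℝ → [0, +∞) be a Borel function with γ(h) → +∞ as h → 0⁺, and suppose sup_n ∫_Ω γ(det Dy_n(x)) dx < ∞. Define J_n : ℝ^N → ℝ by J_n(ξ) = (det Dy_n(y_n⁻¹(ξ)))⁻¹ if ξ ∈ y_n(Ω) and J_n(ξ) = 0 otherwise. Then the family (J_n)_n is uniformly integrable over ℝ^N: for every ε > 0 there exists δ > 0 such that for every measurable A ⊆ ℝ^N of Lebesgue measure less than δ one has sup_n ∫_A J_n dξ < ε. -/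
open MeasureTheory Filter Topology
open scoped ENNReal

/-- Equi-integrability of the Jacobians of the inverse deformations: if `γ ≥ 0` blows up at
`0⁺` and `∫_Ω γ(det Dyₙ) dx` is uniformly bounded, then the inverse Jacobians `Jₙ` (extended
by zero outside `yₙ(Ω)`) are uniformly integrable over `ℝ^N`. -/
theorem inverse_jacobians_uniformly_integrable {N : ℕ} (Ω : Set (Fin N → ℝ))
    (hΩo : IsOpen Ω) (hΩb : Bornology.IsBounded Ω)
    (y : ℕ → (Fin N → ℝ) → (Fin N → ℝ)) (hinj : ∀ n, Set.InjOn (y n) Ω)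
    (F : ℕ → (Fin N → ℝ) → Matrix (Fin N) (Fin N) ℝ)
    (hdiff : ∀ n, ∀ x ∈ Ω, HasFDerivAt (y n) ((F n x).mulVecLin.toContinuousLinearMap) x)
    (hdet : ∀ n, ∀ x ∈ Ω, 0 < (F n x).det)
    (γ : ℝ → ℝ) (hγ_meas : Measurable γ) (hγ_nonneg : ∀ s, 0 ≤ γ s)
    (hγ_blow : Tendsto γ (nhdsWithin 0 (Set.Ioi 0)) atTop)
    (hbound : ∃ C : ℝ≥0∞, C < ⊤ ∧
      ∀ n, ∫⁻ x in Ω, ENNReal.ofReal (γ ((F n x).det)) ≤ C)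
    (J : ℕ → (Fin N → ℝ) → ℝ)
    (hJ : ∀ n, J n = Set.indicator (y n '' Ω)
      (fun ξ => ((F n (Function.invFunOn (y n) Ω ξ)).det)⁻¹)) :
    ∀ ε : ℝ, 0 < ε → ∃ δ : ℝ, 0 < δ ∧ ∀ A : Set (Fin N → ℝ),
      MeasurableSet A → volume A < ENNReal.ofReal δ →
      ∀ n, ∫⁻ ξ in A, ENNReal.ofReal (J n ξ) < ENNReal.ofReal ε := by
  obtain ⟨C, hCtop, hCb⟩ := hbound
  intro ε hε
  -- Choose the threshold `K` for `γ`.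
  set K : ℝ := 2 * C.toReal / ε + 1 with hKdef
  have hK1 : (1 : ℝ) ≤ K := le_add_of_nonneg_left (by positivity)
  have hK0 : (0 : ℝ) < K := lt_of_lt_of_le one_pos hK1
  -- Choose `η > 0` such that `γ s ≥ K` for all `0 < s < η`.
  have hev : ∀ᶠ s in nhdsWithin 0 (Set.Ioi 0), K ≤ γ s :=
    hγ_blow.eventually (eventually_ge_atTop K)
  rw [eventually_nhdsWithin_iff, Metric.eventually_nhds_iff] at hev
  obtain ⟨η, hη0, hη⟩ := hev
  have hηK : ∀ s : ℝ, 0 < s → s < η → K ≤ γ s := by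
    intro s hs hsη
    exact hη (by simpa [abs_of_pos hs] using hsη) hs
  refine ⟨ε * η / 2, by positivity, fun A hA hAvol n => ?_⟩
  -- the "tail" function
  set ψ : (Fin N → ℝ) → ℝ≥0∞ :=
    fun ξ => if η⁻¹ < J n ξ then ENNReal.ofReal (J n ξ) else 0 with hψdef
  -- value of `J n` on the image
  have hJim : ∀ x ∈ Ω, J n (y n x) = ((F n x).det)⁻¹ := by
    intro x hx
    have h1 : Function.invFunOn (y n) Ω (y n x) = x := (hinj n).leftInvOn_invFunOn hx
    rw [hJ n, Set.indicator_of_mem (Set.mem_image_of_mem _ hx), h1]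
  -- change of variables for the tail
  have hder : ∀ x ∈ Ω, HasFDerivWithinAt (y n)
      ((F n x).mulVecLin.toContinuousLinearMap) Ω x :=
    fun x hx => (hdiff n x hx).hasFDerivWithinAt
  have hcov := lintegral_image_eq_lintegral_abs_det_fderiv_mul
    (volume : Measure (Fin N → ℝ)) hΩo.measurableSet hder (hinj n) ψ
  have hdet_eq : ∀ x, ((F n x).mulVecLin.toContinuousLinearMap :
      (Fin N → ℝ) →L[ℝ] (Fin N → ℝ)).det = (F n x).det := by
    intro x
    simp [ContinuousLinearMap.det, ← Matrix.toLin'_apply', LinearMap.det_toLin']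
  have hKne0 : ENNReal.ofReal K ≠ 0 := by simp [ENNReal.ofReal_eq_zero, not_le, hK0]
  -- pointwise bound for the transformed integrand
  have hpt : ∀ x ∈ Ω,
      ENNReal.ofReal |((F n x).mulVecLin.toContinuousLinearMap :
        (Fin N → ℝ) →L[ℝ] (Fin N → ℝ)).det| * ψ (y n x)
      ≤ (ENNReal.ofReal K)⁻¹ * ENNReal.ofReal (γ ((F n x).det)) := by
    intro x hx
    have hd : 0 < (F n x).det := hdet n x hx
    rw [hdet_eq, abs_of_pos hd, hψdef]
    simp only [hJim x hx]
    by_cases hcase : η⁻¹ < ((F n x).det)⁻¹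
    · have hdη : (F n x).det < η := (inv_lt_inv₀ hη0 hd).mp hcase
      have hγK : K ≤ γ ((F n x).det) := hηK _ hd hdη
      have h1 : ENNReal.ofReal ((F n x).det) * ENNReal.ofReal (((F n x).det)⁻¹) = 1 := by
        rw [← ENNReal.ofReal_mul hd.le, mul_inv_cancel₀ hd.ne', ENNReal.ofReal_one]
      rw [if_pos hcase, h1, ← ENNReal.div_eq_inv_mul]
      rw [ENNReal.le_div_iff_mul_le (Or.inl hKne0) (Or.inl ENNReal.ofReal_ne_top), one_mul]
      exact ENNReal.ofReal_le_ofReal hγK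
    · rw [if_neg hcase, mul_zero]
      exact zero_le
  -- bound the tail integral
  have htail : ∫⁻ ξ in y n '' Ω, ψ ξ ≤ (ENNReal.ofReal K)⁻¹ * C := by
    rw [hcov]
    calc ∫⁻ x in Ω, ENNReal.ofReal |((F n x).mulVecLin.toContinuousLinearMap :
          (Fin N → ℝ) →L[ℝ] (Fin N → ℝ)).det| * ψ (y n x)
        ≤ ∫⁻ x in Ω, (ENNReal.ofReal K)⁻¹ * ENNReal.ofReal (γ ((F n x).det)) :=
          lintegral_mono_ae ((ae_restrict_iff' hΩo.measurableSet).mpr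
            (Filter.Eventually.of_forall hpt))
      _ = (ENNReal.ofReal K)⁻¹ * ∫⁻ x in Ω, ENNReal.ofReal (γ ((F n x).det)) :=
          lintegral_const_mul' _ _ (ENNReal.inv_ne_top.mpr hKne0)
      _ ≤ (ENNReal.ofReal K)⁻¹ * C := mul_le_mul_right (hCb n) _
  -- the tail bound is `< ε/2`
  have htail2 : (ENNReal.ofReal K)⁻¹ * C < ENNReal.ofReal (ε / 2) := by
    rw [← ENNReal.div_eq_inv_mul,
      ENNReal.div_lt_iff (Or.inl hKne0) (Or.inl ENNReal.ofReal_ne_top),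
      ← ENNReal.ofReal_mul (by positivity : (0:ℝ) ≤ ε / 2)]
    calc C = ENNReal.ofReal C.toReal := (ENNReal.ofReal_toReal hCtop.ne).symm
      _ < ENNReal.ofReal (ε / 2 * K) := by
          apply (ENNReal.ofReal_lt_ofReal_iff (by positivity)).mpr
          have h : ε / 2 * K = C.toReal + ε / 2 := by
            rw [hKdef]; field_simp
          rw [h]
          linarith [ENNReal.toReal_nonneg (a := C)]
  -- pointwise bound splitting off the tail
  have hpoint : ∀ ξ, ENNReal.ofReal (J n ξ)
      ≤ ENNReal.ofReal η⁻¹ + Set.indicator (y n '' Ω) ψ ξ := by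
    intro ξ
    by_cases hmem : ξ ∈ y n '' Ω
    · rw [Set.indicator_of_mem hmem]
      by_cases h2 : η⁻¹ < J n ξ
      · rw [hψdef]; simp only [if_pos h2]; exact le_add_self
      · exact le_trans (ENNReal.ofReal_le_ofReal (not_lt.mp h2)) le_self_add
    · have h0 : J n ξ = 0 := by rw [hJ n]; exact Set.indicator_of_notMem hmem _
      simp [h0]
  calc ∫⁻ ξ in A, ENNReal.ofReal (J n ξ)
      ≤ ∫⁻ ξ in A, (ENNReal.ofReal η⁻¹ + Set.indicator (y n '' Ω) ψ ξ) :=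
        lintegral_mono hpoint
    _ = ENNReal.ofReal η⁻¹ * volume A + ∫⁻ ξ in A, Set.indicator (y n '' Ω) ψ ξ := by
        rw [lintegral_add_left measurable_const, setLIntegral_const]
    _ ≤ ENNReal.ofReal η⁻¹ * volume A + ∫⁻ ξ in y n '' Ω, ψ ξ := by
        exact add_le_add_right
          ((setLIntegral_le_lintegral _ _).trans (lintegral_indicator_le _ _)) _
    _ < ENNReal.ofReal (ε / 2) + ENNReal.ofReal (ε / 2) := by
        apply ENNReal.add_lt_add
        · calc ENNReal.ofReal η⁻¹ * volume A
              < ENNReal.ofReal η⁻¹ * ENNReal.ofReal (ε * η / 2) :=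
                (ENNReal.mul_lt_mul_iff_right (ENNReal.ofReal_pos.mpr (by positivity)).ne'
                  ENNReal.ofReal_ne_top).mpr hAvol
            _ = ENNReal.ofReal (ε / 2) := by
                rw [← ENNReal.ofReal_mul (by positivity)]
                congr 1
                field_simp
        · exact lt_of_le_of_lt htail htail2
    _ = ENNReal.ofReal ε := by
        rw [← ENNReal.ofReal_add (by positivity) (by positivity), add_halves]
end
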